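/- arXiv:1309.6041 — 11 statements merged into one kernel-verified Lean document; each statement's English description precedes it below -/
import Mathlib

section
/- Let α > 0 and β ≥ 0 be real numbers, and define f(x) = (α + βx)/(1 − e^{−x}) + x for x > 0. Then f is strictly convex on (0, ∞); in particular its second derivative f''(x) = e^x·(α(e^x + 1) + β(e^x(x−2) + x + 2))/(e^x − 1)^3 is strictly positive for all x > 0. -/
private lemma key_fun_hasDerivAt (y : ℝ) :
    HasDerivAt (fun x : ℝ => Real.exp x * (x - 2) + x + 2)
      (Real.exp y * (y - 1) + 1) y := by
  have h1 := (((Real.hasDerivAt_exp y).mul ((hasDerivAt_id y).sub_const 2)).add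
    (hasDerivAt_id y)).add_const 2
  refine h1.congr_deriv ?_
  simp only [id_eq]
  ring

private lemma key_nonneg (x : ℝ) (hx : 0 ≤ x) :
    0 ≤ Real.exp x * (x - 2) + x + 2 := by
  have hmono : Monotone (fun x : ℝ => Real.exp x * (x - 2) + x + 2) := by
    refine monotone_of_deriv_nonneg (fun y => (key_fun_hasDerivAt y).differentiableAt) ?_
    intro y
    rw [(key_fun_hasDerivAt y).deriv]
    have h := Real.add_one_le_exp (-y)
    have h2 : Real.exp y * (-y + 1) ≤ 1 := by
      have := mul_le_mul_of_nonneg_left h (Real.exp_nonneg y)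
      rwa [← Real.exp_add, add_neg_cancel, Real.exp_zero] at this
    nlinarith
  have h0 := hmono hx
  simpa using h0

/-- For `α > 0` and `β ≥ 0`, the function `f(x) = (α + βx)/(1 - e^{-x}) + x` is strictly
convex on `(0, ∞)`; in particular its second derivative equals
`e^x (α(e^x + 1) + β(e^x(x-2) + x + 2)) / (e^x - 1)^3` and is strictly positive on `(0, ∞)`. -/
theorem stmt_4 (α β : ℝ) (hα : 0 < α) (hβ : 0 ≤ β) :
    StrictConvexOn ℝ (Set.Ioi (0 : ℝ))
      (fun x => (α + β * x) / (1 - Real.exp (-x)) + x) ∧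
    ∀ x : ℝ, 0 < x →
      deriv (deriv (fun x => (α + β * x) / (1 - Real.exp (-x)) + x)) x =
        Real.exp x * (α * (Real.exp x + 1) + β * (Real.exp x * (x - 2) + x + 2)) /
          (Real.exp x - 1) ^ 3 ∧
      0 < deriv (deriv (fun x => (α + β * x) / (1 - Real.exp (-x)) + x)) x := by
  set f : ℝ → ℝ := fun x => (α + β * x) / (1 - Real.exp (-x)) + x with hf
  set f1 : ℝ → ℝ := fun x =>
    (β * (1 - Real.exp (-x)) - (α + β * x) * Real.exp (-x)) / (1 - Real.exp (-x)) ^ 2 + 1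
    with hf1def
  set F : ℝ → ℝ := fun x =>
    Real.exp x * (α * (Real.exp x + 1) + β * (Real.exp x * (x - 2) + x + 2)) /
      (Real.exp x - 1) ^ 3 with hFdef
  -- derivative of exp(-x)
  have hE : ∀ x : ℝ, HasDerivAt (fun x : ℝ => Real.exp (-x)) (-Real.exp (-x)) x := by
    intro x
    have := (Real.hasDerivAt_exp (-x)).comp x (hasDerivAt_neg x)
    simpa [mul_comm, Function.comp_def] using this
  have hv : ∀ x : ℝ, HasDerivAt (fun x : ℝ => 1 - Real.exp (-x)) (Real.exp (-x)) x := by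
    intro x
    exact ((hasDerivAt_const x (1 : ℝ)).sub (hE x)).congr_deriv (by ring)
  have hvpos : ∀ x : ℝ, 0 < x → 0 < 1 - Real.exp (-x) := by
    intro x hx
    have := Real.exp_lt_one_iff.mpr (by linarith : -x < 0)
    linarith
  have hu : ∀ x : ℝ, HasDerivAt (fun x : ℝ => α + β * x) β x := by
    intro x
    exact ((hasDerivAt_const x α).add ((hasDerivAt_id x).const_mul β)).congr_deriv (by ring)
  -- first derivative
  have hderiv1 : ∀ x : ℝ, 0 < x → HasDerivAt f (f1 x) x := by
    intro x hx
    have hvne : (1 - Real.exp (-x)) ≠ 0 := ne_of_gt (hvpos x hx)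
    have h := ((hu x).div (hv x) hvne).add (hasDerivAt_id x)
    exact h
  -- second derivative
  have hderiv2 : ∀ x : ℝ, 0 < x → HasDerivAt f1 (F x) x := by
    intro x hx
    have hvne : (1 - Real.exp (-x)) ≠ 0 := ne_of_gt (hvpos x hx)
    have hDne : (1 - Real.exp (-x)) ^ 2 ≠ 0 := pow_ne_zero 2 hvne
    have hN : HasDerivAt (fun x : ℝ => β * (1 - Real.exp (-x)) - (α + β * x) * Real.exp (-x))
        (β * Real.exp (-x) - (β * Real.exp (-x) + (α + β * x) * (-Real.exp (-x)))) x :=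
      ((hv x).const_mul β).sub ((hu x).mul (hE x))
    have hD : HasDerivAt (fun x : ℝ => (1 - Real.exp (-x)) ^ 2)
        ((2 : ℕ) * (1 - Real.exp (-x)) ^ (2 - 1) * Real.exp (-x)) x :=
      (hv x).pow 2
    have h := (hN.div hD hDne).add_const 1
    have heq : (β * Real.exp (-x) - (β * Real.exp (-x) + (α + β * x) * (-Real.exp (-x)))) *
          (1 - Real.exp (-x)) ^ 2 -
          (β * (1 - Real.exp (-x)) - (α + β * x) * Real.exp (-x)) *
          ((2 : ℕ) * (1 - Real.exp (-x)) ^ (2 - 1) * Real.exp (-x)) = 0 ∨ True := Or.inr trivial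
    have hkey : ((β * Real.exp (-x) - (β * Real.exp (-x) + (α + β * x) * (-Real.exp (-x)))) *
          (1 - Real.exp (-x)) ^ 2 -
          (β * (1 - Real.exp (-x)) - (α + β * x) * Real.exp (-x)) *
          ((2 : ℕ) * (1 - Real.exp (-x)) ^ (2 - 1) * Real.exp (-x))) /
          ((1 - Real.exp (-x)) ^ 2) ^ 2 = F x := by
      have hy : Real.exp (-x) = (Real.exp x)⁻¹ := Real.exp_neg x
      have hy1 : 1 < Real.exp x := Real.one_lt_exp_iff.mpr hx
      have hyne : Real.exp x ≠ 0 := (Real.exp_pos x).ne'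
      have hym1 : Real.exp x - 1 ≠ 0 := by linarith
      rw [hFdef, hy]
      have h1 : 1 - (Real.exp x)⁻¹ = (Real.exp x - 1) / Real.exp x := by
        field_simp
      rw [h1]
      field_simp
      norm_num
      field_simp
      ring
    rw [hkey] at h
    exact h
  -- deriv f agrees with f1 on Ioi 0
  have hderiv_eq : ∀ x : ℝ, 0 < x → deriv (deriv f) x = F x := by
    intro x hx
    have hev : deriv f =ᶠ[nhds x] f1 := by
      filter_upwards [Ioi_mem_nhds hx] with y hy
      exact (hderiv1 y hy).deriv
    rw [hev.deriv_eq, (hderiv2 x hx).deriv]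
  have hFpos : ∀ x : ℝ, 0 < x → 0 < F x := by
    intro x hx
    have hy1 : 1 < Real.exp x := Real.one_lt_exp_iff.mpr hx
    have hnum : 0 < α * (Real.exp x + 1) + β * (Real.exp x * (x - 2) + x + 2) := by
      have h1 : 0 < α * (Real.exp x + 1) := by positivity
      have h2 : 0 ≤ β * (Real.exp x * (x - 2) + x + 2) :=
        mul_nonneg hβ (key_nonneg x hx.le)
      linarith
    have : 0 < (Real.exp x - 1) ^ 3 := pow_pos (by linarith) 3
    rw [hFdef]
    exact div_pos (mul_pos (Real.exp_pos x) hnum) this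
  constructor
  · apply strictConvexOn_of_deriv2_pos (convex_Ioi 0)
    · intro x hx
      exact (hderiv1 x hx).continuousAt.continuousWithinAt
    · intro x hx
      rw [interior_Ioi] at hx
      have : deriv^[2] f x = deriv (deriv f) x := by
        simp [Function.iterate_succ, Function.iterate_one]
      rw [this, hderiv_eq x hx]
      exact hFpos x hx
  · intro x hx
    rw [hderiv_eq x hx]
    exact ⟨rfl, hFpos x hx⟩
end

section
/- Let α > 0 and β ∈ (−1, 0) be real numbers, and define g(x) = α(e^x + 1) + β(e^x(x − 2) + x + 2) for x ≥ 0. Then g(0) = 2α > 0, g(x) → −∞ as x → ∞, and there exists a unique x₀ > 0 with g(x₀) = 0; moreover g(x) > 0 for all x ∈ (0, x₀) and g(x) < 0 for all x ∈ (x₀, ∞). -/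
open Filter

noncomputable def φfn : ℝ → ℝ := fun x => (Real.exp x * (x - 2) + x + 2) / (Real.exp x + 1)

lemma exp_add_one_pos (x : ℝ) : 0 < Real.exp x + 1 := by positivity

lemma phi_hasDeriv (x : ℝ) :
    HasDerivAt φfn ((Real.exp x - 1) ^ 2 / (Real.exp x + 1) ^ 2) x := by
  have hN : HasDerivAt (fun x => Real.exp x * (x - 2) + x + 2)
      (Real.exp x * (x - 2) + Real.exp x * 1 + 1) x := by
    have := ((Real.hasDerivAt_exp x).mul ((hasDerivAt_id x).sub_const 2)).add (hasDerivAt_id x)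
    simpa using this.add_const 2
  have hD : HasDerivAt (fun x => Real.exp x + 1) (Real.exp x) x :=
    (Real.hasDerivAt_exp x).add_const 1
  have h := hN.div hD (ne_of_gt (exp_add_one_pos x))
  exact h.congr_deriv (by field_simp; ring)

lemma phi_cont : Continuous φfn := by
  unfold φfn
  exact Continuous.div (by continuity) (by continuity)
    (fun x => ne_of_gt (exp_add_one_pos x))

lemma phi_mono : StrictMonoOn φfn (Set.Ici 0) := by
  apply strictMonoOn_of_deriv_pos (convex_Ici 0)
  · exact phi_cont.continuousOn
  · intro x hx
    rw [interior_Ici] at hx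
    rw [(phi_hasDeriv x).deriv]
    have h1 : 1 < Real.exp x := Real.one_lt_exp_iff.mpr hx
    have h2 : (0:ℝ) < Real.exp x - 1 := by linarith
    positivity

/-- For `α > 0` and `β ∈ (-1, 0)`, the function `g(x) = α(e^x + 1) + β(e^x(x-2) + x + 2)`
satisfies `g(0) = 2α > 0`, tends to `-∞` as `x → ∞`, and has a unique positive zero `x₀`;
moreover `g > 0` on `(0, x₀)` and `g < 0` on `(x₀, ∞)`. -/
theorem stmt_5 (α β : ℝ) (hα : 0 < α) (hβ : β ∈ Set.Ioo (-1 : ℝ) 0) :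
    (fun x : ℝ => α * (Real.exp x + 1) + β * (Real.exp x * (x - 2) + x + 2)) 0 = 2 * α ∧
    0 < 2 * α ∧
    Tendsto (fun x : ℝ => α * (Real.exp x + 1) + β * (Real.exp x * (x - 2) + x + 2))
      atTop atBot ∧
    ∃ x₀ : ℝ, 0 < x₀ ∧
      α * (Real.exp x₀ + 1) + β * (Real.exp x₀ * (x₀ - 2) + x₀ + 2) = 0 ∧
      (∀ y : ℝ, 0 < y →
        α * (Real.exp y + 1) + β * (Real.exp y * (y - 2) + y + 2) = 0 → y = x₀) ∧
      (∀ x ∈ Set.Ioo 0 x₀,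
        0 < α * (Real.exp x + 1) + β * (Real.exp x * (x - 2) + x + 2)) ∧
      (∀ x ∈ Set.Ioi x₀,
        α * (Real.exp x + 1) + β * (Real.exp x * (x - 2) + x + 2) < 0) := by
  obtain ⟨hβ1, hβ0⟩ := hβ
  set g : ℝ → ℝ := fun x : ℝ => α * (Real.exp x + 1) + β * (Real.exp x * (x - 2) + x + 2)
    with hg
  have key : ∀ x : ℝ, g x = (Real.exp x + 1) * (α + β * φfn x) := by
    intro x
    have hD := ne_of_gt (exp_add_one_pos x)
    simp only [hg, φfn]
    field_simp
  set c : ℝ := α / (-β) with hc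
  have hcpos : 0 < c := div_pos hα (by linarith)
  have hphi0 : φfn 0 = 0 := by simp [φfn]
  -- φ tends to atTop
  have hphi_top : Tendsto φfn atTop atTop := by
    apply tendsto_atTop_mono (f := fun x : ℝ => x - 2)
    · intro x
      rw [φfn, le_div_iff₀ (exp_add_one_pos x)]
      nlinarith [Real.exp_pos x]
    · exact tendsto_atTop_add_const_right _ _ tendsto_id
  -- sign equivalences
  have sign_pos : ∀ x : ℝ, φfn x < c → 0 < g x := by
    intro x h
    rw [key]
    have : 0 < α + β * φfn x := by
      rw [hc, lt_div_iff₀ (by linarith : (0:ℝ) < -β)] at h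
      nlinarith
    exact mul_pos (exp_add_one_pos x) this
  have sign_neg : ∀ x : ℝ, c < φfn x → g x < 0 := by
    intro x h
    rw [key]
    have : α + β * φfn x < 0 := by
      rw [hc, div_lt_iff₀ (by linarith : (0:ℝ) < -β)] at h
      nlinarith
    nlinarith [exp_add_one_pos x]
  have sign_zero : ∀ x : ℝ, φfn x = c → g x = 0 := by
    intro x h
    have hβne : β ≠ 0 := ne_of_lt hβ0
    rw [key, h, hc]
    field_simp [hβne]
    ring
  have hg0 : g 0 = 2 * α := by
    simp only [hg, Real.exp_zero]
    ring
  refine ⟨hg0, by linarith, ?_, ?_⟩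
  · -- tendsto atBot
    have h1 : Tendsto (fun x : ℝ => Real.exp x + 1) atTop atTop :=
      tendsto_atTop_add_const_right _ _ Real.tendsto_exp_atTop
    have h2 : Tendsto (fun x : ℝ => α + β * φfn x) atTop atBot := by
      apply tendsto_atBot_add_const_left
      exact (tendsto_const_mul_atBot_of_neg hβ0).mpr hphi_top
    exact (h1.atTop_mul_atBot₀ h2).congr (fun x => (key x).symm)
  · -- the zero
    obtain ⟨M, hM, hM0⟩ :=
      ((hphi_top.eventually_ge_atTop c).and (eventually_ge_atTop (0:ℝ))).exists
    obtain ⟨x₀, hx₀mem, hx₀⟩ := intermediate_value_Icc hM0 phi_cont.continuousOn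
      (Set.mem_Icc.mpr ⟨by rw [hphi0]; exact le_of_lt hcpos, hM⟩)
    have hx₀pos : 0 < x₀ := by
      rcases lt_or_eq_of_le hx₀mem.1 with h | h
      · exact h
      · exfalso; rw [← h, hphi0] at hx₀; linarith
    have hval : ∀ y : ℝ, g y = 0 → φfn y = c := by
      intro y hy
      rw [key] at hy
      have h2 : α + β * φfn y = 0 :=
        (mul_eq_zero.mp hy).resolve_left (ne_of_gt (exp_add_one_pos y))
      rw [hc, eq_div_iff (neg_ne_zero.mpr (ne_of_lt hβ0))]
      linear_combination -h2
    refine ⟨x₀, hx₀pos, sign_zero x₀ hx₀, ?_, ?_, ?_⟩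
    · intro y hy hgy
      exact phi_mono.injOn (le_of_lt hy) (le_of_lt hx₀pos)
        ((hval y hgy).trans hx₀.symm)
    · intro x hx
      exact sign_pos x (hx₀ ▸ phi_mono (le_of_lt hx.1) (le_of_lt hx₀pos) hx.2)
    · intro x hx
      exact sign_neg x (hx₀ ▸ phi_mono (le_of_lt hx₀pos)
        (le_of_lt (lt_trans hx₀pos hx)) hx)
end

section
/- Let α > 0 and β > −1 be real numbers, and define f(x) = (α + βx)/(1 − e^{−x}) + x for x > 0. Then f is quasi-convex on (0, ∞), i.e., every sublevel set {x ∈ (0, ∞) : f(x) ≤ c} is convex (an interval). -/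
open Real Set Filter

private noncomputable def stmt6g (α β x : ℝ) : ℝ :=
  (1 - Real.exp (-x))^2 + β * (1 - Real.exp (-x)) - (α + β * x) * Real.exp (-x)

private noncomputable def stmt6p (α β x : ℝ) : ℝ := 2 * (1 - Real.exp (-x)) + α + β * x

private lemma stmt6_hasDerivAt_u (x : ℝ) :
    HasDerivAt (fun x : ℝ => 1 - Real.exp (-x)) (Real.exp (-x)) x := by
  simpa using ((Real.hasDerivAt_exp (-x)).comp x (hasDerivAt_neg x)).const_sub 1

private lemma stmt6_exp_chord {t y : ℝ} (ht : 0 ≤ t) (hty : t ≤ y) (hy : 0 < y) :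
    t * (1 - Real.exp (-y)) ≤ y * (1 - Real.exp (-t)) := by
  have hs0 : 0 ≤ t / y := div_nonneg ht hy.le
  have hs1 : t / y ≤ 1 := (div_le_one hy).2 hty
  have key := convexOn_exp.2 (mem_univ (0 : ℝ)) (mem_univ (-y)) (by linarith : (0:ℝ) ≤ 1 - t / y)
    hs0 (by ring)
  have heq : (1 - t / y) • (0:ℝ) + (t / y) • (-y) = -t := by
    rw [smul_eq_mul, smul_eq_mul, mul_zero, zero_add, mul_neg, div_mul_cancel₀ t hy.ne']
  rw [heq] at key
  have : Real.exp (-t) ≤ (1 - t / y) + (t / y) * Real.exp (-y) := by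
    simpa [smul_eq_mul, Real.exp_zero] using key
  have h2 : y * Real.exp (-t) ≤ y * ((1 - t / y) + (t / y) * Real.exp (-y)) :=
    mul_le_mul_of_nonneg_left this hy.le
  have h3 : y * ((1 - t / y) + (t / y) * Real.exp (-y)) = y - t + t * Real.exp (-y) := by
    field_simp
  nlinarith

private lemma stmt6_p_nonneg {α β : ℝ} (hα : 0 < α) {t y : ℝ} (ht : 0 < t) (hty : t ≤ y)
    (hpy : 0 ≤ stmt6p α β y) : 0 ≤ stmt6p α β t := by
  have hy : 0 < y := ht.trans_le hty
  have het : Real.exp (-t) ≤ 1 := Real.exp_le_one_iff.2 (by linarith)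
  rcases le_or_gt 0 β with hb | hb
  · unfold stmt6p; nlinarith [mul_nonneg hb ht.le]
  · have chord := stmt6_exp_chord ht.le hty hy
    unfold stmt6p at hpy ⊢
    nlinarith [mul_nonneg ht.le hpy, mul_nonneg (sub_nonneg.2 hty) hα.le, chord, hy, ht]

private lemma stmt6_hasDerivAt_g (α β x : ℝ) :
    HasDerivAt (stmt6g α β) (Real.exp (-x) * stmt6p α β x) x := by
  have hu := stmt6_hasDerivAt_u x
  have h1 : HasDerivAt (fun x : ℝ => α + β * x) β x := by
    simpa using ((hasDerivAt_id x).const_mul β).const_add α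
  have h2 : HasDerivAt (fun x : ℝ => (α + β * x) * Real.exp (-x))
      (β * Real.exp (-x) + (α + β * x) * (-Real.exp (-x))) x := by
    have he : HasDerivAt (fun x : ℝ => Real.exp (-x)) (-Real.exp (-x)) x := by
      exact ((Real.hasDerivAt_exp (-x)).comp x (hasDerivAt_neg x)).congr_deriv (by simp)
    exact h1.mul he
  have h3 := ((hu.pow 2).add (hu.const_mul β)).sub h2
  exact h3.congr_deriv (by unfold stmt6p; ring)

private lemma stmt6_hasDerivAt_f (α β : ℝ) {x : ℝ} (hx : 0 < x) :
    HasDerivAt (fun x => (α + β * x) / (1 - Real.exp (-x)) + x)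
      (stmt6g α β x / (1 - Real.exp (-x))^2) x := by
  have hune : (1 : ℝ) - Real.exp (-x) ≠ 0 := by
    have : Real.exp (-x) < 1 := Real.exp_lt_one_iff.2 (by linarith)
    linarith
  have h1 : HasDerivAt (fun x : ℝ => α + β * x) β x := by
    simpa using ((hasDerivAt_id x).const_mul β).const_add α
  have hdiv := (h1.div (stmt6_hasDerivAt_u x) hune).add (hasDerivAt_id x)
  refine hdiv.congr_deriv ?_
  unfold stmt6g
  field_simp
  ring

private lemma stmt6_tendsto_g (α β : ℝ) :
    Tendsto (stmt6g α β) atTop (nhds (1 + β)) := by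
  have h0 : Tendsto (fun x : ℝ => Real.exp (-x)) atTop (nhds 0) :=
    Real.tendsto_exp_neg_atTop_nhds_zero
  have h1 : Tendsto (fun x : ℝ => x * Real.exp (-x)) atTop (nhds 0) := by
    simpa using Real.tendsto_pow_mul_exp_neg_atTop_nhds_zero 1
  have h : Tendsto (fun x : ℝ => (1 - Real.exp (-x))^2 + β * (1 - Real.exp (-x)) -
      (α * Real.exp (-x) + β * (x * Real.exp (-x)))) atTop
      (nhds ((1 - 0)^2 + β * (1 - 0) - (α * 0 + β * 0))) :=
    (((tendsto_const_nhds.sub h0).pow 2).add (tendsto_const_nhds.mul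
      (tendsto_const_nhds.sub h0))).sub
      ((tendsto_const_nhds.mul h0).add (tendsto_const_nhds.mul h1))
  have heq : stmt6g α β = fun x : ℝ => (1 - Real.exp (-x))^2 + β * (1 - Real.exp (-x)) -
      (α * Real.exp (-x) + β * (x * Real.exp (-x))) := by
    funext x; unfold stmt6g; ring
  rw [heq]
  convert h using 2
  norm_num

private lemma stmt6_continuous_g (α β : ℝ) : Continuous (stmt6g α β) := by
  unfold stmt6g; fun_prop

private lemma stmt6_crossing {α β : ℝ} (hα : 0 < α) (hβ : -1 < β) {x y : ℝ} (hx : 0 < x)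
    (hxy : x ≤ y) (hgx : 0 ≤ stmt6g α β x) : 0 ≤ stmt6g α β y := by
  rcases le_or_gt 0 (stmt6p α β y) with hpy | hpy
  · have hmono : MonotoneOn (stmt6g α β) (Icc x y) := by
      apply monotoneOn_of_deriv_nonneg (convex_Icc x y) (stmt6_continuous_g α β).continuousOn
      · exact fun t _ => (stmt6_hasDerivAt_g α β t).differentiableAt.differentiableWithinAt
      · intro t ht
        rw [interior_Icc] at ht
        rw [(stmt6_hasDerivAt_g α β t).deriv]
        exact mul_nonneg (Real.exp_nonneg _) (stmt6_p_nonneg hα (hx.trans ht.1) ht.2.le hpy)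
    exact hgx.trans (hmono ⟨le_refl x, hxy⟩ ⟨hxy, le_refl y⟩ hxy)
  · have hy : 0 < y := hx.trans_le hxy
    have hanti : AntitoneOn (stmt6g α β) (Ici y) := by
      apply antitoneOn_of_deriv_nonpos (convex_Ici y) (stmt6_continuous_g α β).continuousOn
      · exact fun t _ => (stmt6_hasDerivAt_g α β t).differentiableAt.differentiableWithinAt
      · intro t ht
        rw [interior_Ici] at ht
        rw [(stmt6_hasDerivAt_g α β t).deriv]
        have hpt : stmt6p α β t < 0 := by
          by_contra h
          push_neg at h
          exact absurd (stmt6_p_nonneg hα hy ht.le h) (not_le.2 hpy)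
        exact mul_nonpos_of_nonneg_of_nonpos (Real.exp_nonneg _) hpt.le
    have hle : (1:ℝ) + β ≤ stmt6g α β y := by
      apply le_of_tendsto (stmt6_tendsto_g α β)
      filter_upwards [eventually_ge_atTop y] with z hz
      exact hanti (le_refl y) hz hz
    linarith

/-- For `α > 0` and `β > -1`, the function `f(x) = (α + βx)/(1 - e^{-x}) + x` is
quasi-convex on `(0, ∞)`. -/
theorem stmt_6 (α β : ℝ) (hα : 0 < α) (hβ : -1 < β) :
    QuasiconvexOn ℝ (Set.Ioi (0 : ℝ))
      (fun x => (α + β * x) / (1 - Real.exp (-x)) + x) := by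
  intro c
  rw [convex_iff_ordConnected]
  constructor
  intro a ha b hb z hz
  obtain ⟨ha0, hfa⟩ := ha
  obtain ⟨hb0, hfb⟩ := hb
  have hz0 : (0:ℝ) < z := lt_of_lt_of_le ha0 hz.1
  refine ⟨hz0, ?_⟩
  set f : ℝ → ℝ := fun x => (α + β * x) / (1 - Real.exp (-x)) + x with hf
  rcases le_or_gt 0 (stmt6g α β z) with hgz | hgz
  · -- f monotone on [z, b]
    have hmono : MonotoneOn f (Icc z b) := by
      apply monotoneOn_of_deriv_nonneg (convex_Icc z b)
      · exact fun t ht => (stmt6_hasDerivAt_f α β (hz0.trans_le ht.1)).differentiableAt.continuousAt.continuousWithinAt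
      · intro t ht
        rw [interior_Icc] at ht
        exact (stmt6_hasDerivAt_f α β (hz0.trans ht.1)).differentiableAt.differentiableWithinAt
      · intro t ht
        rw [interior_Icc] at ht
        have ht0 : 0 < t := hz0.trans ht.1
        rw [(stmt6_hasDerivAt_f α β ht0).deriv]
        exact div_nonneg (stmt6_crossing hα hβ hz0 ht.1.le hgz) (sq_nonneg _)
    calc f z ≤ f b := hmono ⟨le_refl z, hz.2⟩ ⟨hz.2, le_refl b⟩ hz.2
      _ ≤ c := hfb
  · -- f antitone on [a, z]
    have hanti : AntitoneOn f (Icc a z) := by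
      apply antitoneOn_of_deriv_nonpos (convex_Icc a z)
      · exact fun t ht => (stmt6_hasDerivAt_f α β (ha0.trans_le ht.1)).differentiableAt.continuousAt.continuousWithinAt
      · intro t ht
        rw [interior_Icc] at ht
        exact (stmt6_hasDerivAt_f α β (ha0.trans ht.1)).differentiableAt.differentiableWithinAt
      · intro t ht
        rw [interior_Icc] at ht
        have ht0 : 0 < t := ha0.trans ht.1
        rw [(stmt6_hasDerivAt_f α β ht0).deriv]
        have hgt : stmt6g α β t < 0 := by
          by_contra h
          push_neg at h
          exact absurd (stmt6_crossing hα hβ ht0 ht.2.le h) (not_le.2 hgz)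
        exact div_nonpos_of_nonpos_of_nonneg hgt.le (sq_nonneg _)
    calc f z ≤ f a := hanti ⟨le_refl a, hz.1⟩ ⟨hz.1, le_refl z⟩ hz.1
      _ ≤ c := hfa
end

section
/- Let α > 0 and β ∈ (−1, 0) be real numbers, and define f(x) = (α + βx)/(1 − e^{−x}) + x for x > 0. Then f(x) → ∞ as x → 0⁺ and f(x) → ∞ as x → ∞, f attains a global minimum at a unique point x* ∈ (0, ∞), and f is strictly increasing on (x*, ∞). -/
open Filter Real Set

noncomputable def fD (α β : ℝ) (x : ℝ) : ℝ := (α + β * x) / (1 - Real.exp (-x)) + x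
noncomputable def ND (α β : ℝ) (x : ℝ) : ℝ :=
  β * (1 - Real.exp (-x)) - (α + β * x) * Real.exp (-x) + (1 - Real.exp (-x))^2
noncomputable def mD (α β : ℝ) (x : ℝ) : ℝ := α + β * x + 2 - 2 * Real.exp (-x)

lemma hasDerivAt_expneg (x : ℝ) : HasDerivAt (fun x : ℝ => Real.exp (-x)) (-Real.exp (-x)) x := by
  exact ((Real.hasDerivAt_exp (-x)).comp x (hasDerivAt_neg x)).congr_deriv (by ring)

lemma hasDerivAt_m (α β x : ℝ) : HasDerivAt (mD α β) (β + 2 * Real.exp (-x)) x := by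
  unfold mD
  have h1 : HasDerivAt (fun x : ℝ => α + β * x + 2) β x := by
    simpa using (((hasDerivAt_id x).const_mul β).const_add α).add_const 2
  exact (h1.sub ((hasDerivAt_expneg x).const_mul 2)).congr_deriv (by ring)

lemma hasDerivAt_N (α β x : ℝ) : HasDerivAt (ND α β) (Real.exp (-x) * mD α β x) x := by
  unfold ND
  have hd : HasDerivAt (fun x : ℝ => 1 - Real.exp (-x)) (Real.exp (-x)) x := by
    exact ((hasDerivAt_const x (1:ℝ)).sub (hasDerivAt_expneg x)).congr_deriv (by ring)
  have hnum : HasDerivAt (fun x : ℝ => α + β * x) β x := by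
    simpa using ((hasDerivAt_id x).const_mul β).const_add α
  have h := ((hd.const_mul β).sub (hnum.mul (hasDerivAt_expneg x))).add (hd.pow 2)
  refine h.congr_deriv ?_
  unfold mD; ring

lemma hasDerivAt_f (α β x : ℝ) (hx : 0 < x) :
    HasDerivAt (fD α β) (ND α β x / (1 - Real.exp (-x))^2) x := by
  have hdpos : 0 < 1 - Real.exp (-x) := by
    have : Real.exp (-x) < 1 := Real.exp_lt_one_iff.2 (by linarith)
    linarith
  have hd : HasDerivAt (fun x : ℝ => 1 - Real.exp (-x)) (Real.exp (-x)) x := by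
    exact ((hasDerivAt_const x (1:ℝ)).sub (hasDerivAt_expneg x)).congr_deriv (by ring)
  have hnum : HasDerivAt (fun x : ℝ => α + β * x) β x := by
    simpa using ((hasDerivAt_id x).const_mul β).const_add α
  have h := (hnum.div hd hdpos.ne').add (hasDerivAt_id x)
  refine h.congr_deriv ?_
  unfold ND
  field_simp

lemma dpos (x : ℝ) (hx : 0 < x) : 0 < 1 - Real.exp (-x) := by
  have : Real.exp (-x) < 1 := Real.exp_lt_one_iff.2 (by linarith)
  linarith


lemma m_shape (α β : ℝ) (hα : 0 < α) (hβ1 : -1 < β) (hβ0 : β < 0) :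
    ∃ x₁ > 0, (∀ x, 0 ≤ x → x < x₁ → 0 < mD α β x) ∧ (∀ x, x₁ < x → mD α β x < 0) := by
  set a := Real.log (2 / (-β)) with ha_def
  have h2β : (1:ℝ) < 2 / (-β) := by
    rw [lt_div_iff₀ (by linarith)]; linarith
  have ha : 0 < a := Real.log_pos h2β
  have hexpa : Real.exp (-a) = -β / 2 := by
    rw [Real.exp_neg, Real.exp_log (by linarith)]
    field_simp
  have hcont : ∀ s : Set ℝ, ContinuousOn (mD α β) s := fun s x _ =>
    (hasDerivAt_m α β x).continuousAt.continuousWithinAt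
  have hmono : StrictMonoOn (mD α β) (Iic a) := by
    apply strictMonoOn_of_deriv_pos (convex_Iic a) (hcont _)
    intro x hx
    rw [interior_Iic] at hx
    rw [(hasDerivAt_m α β x).deriv]
    have : Real.exp (-a) < Real.exp (-x) := Real.exp_lt_exp.2 (by linarith [hx.out])
    rw [hexpa] at this; linarith
  have hanti : StrictAntiOn (mD α β) (Ici a) := by
    apply strictAntiOn_of_deriv_neg (convex_Ici a) (hcont _)
    intro x hx
    rw [interior_Ici] at hx
    rw [(hasDerivAt_m α β x).deriv]
    have : Real.exp (-x) < Real.exp (-a) := Real.exp_lt_exp.2 (by linarith [hx.out])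
    rw [hexpa] at this; linarith
  have hm0 : mD α β 0 = α := by simp [mD]
  have hma : 0 < mD α β a := by
    have := hmono (le_of_lt ha : (0:ℝ) ≤ a) (le_refl a) ha
    rw [hm0] at this; linarith
  set b := max (a+1) ((α+3)/(-β)) with hb_def
  have hab : a < b := lt_of_lt_of_le (by linarith) (le_max_left _ _)
  have hmb : mD α β b < 0 := by
    have hb2 : (α+3)/(-β) ≤ b := le_max_right _ _
    have hβb : β * b ≤ -(α+3) := by
      have := mul_le_mul_of_nonpos_left hb2 (le_of_lt hβ0)
      rw [mul_div_assoc'] at this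
      calc β * b ≤ β * (α+3) / -β := by linarith [this]
        _ = -(α+3) := by rw [div_eq_iff (show -β ≠ 0 by linarith)]; ring
    have : 0 < Real.exp (-b) := Real.exp_pos _
    simp only [mD]; nlinarith
  obtain ⟨x₁, hx₁mem, hx₁⟩ := intermediate_value_Ioo' (le_of_lt hab) (hcont _)
    (show (0:ℝ) ∈ Ioo (mD α β b) (mD α β a) from ⟨hmb, hma⟩)
  refine ⟨x₁, lt_trans ha hx₁mem.1, ?_, ?_⟩
  · intro x hx0 hxx₁
    rcases le_or_gt x a with h | h
    · have := hmono.monotoneOn (show (0:ℝ) ∈ Iic a by simpa using le_of_lt ha) h hx0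
      rw [hm0] at this; linarith
    · have := hanti (le_of_lt h) (le_of_lt hx₁mem.1) hxx₁
      rw [hx₁] at this; linarith
  · intro x hx
    have := hanti (le_of_lt hx₁mem.1) (le_of_lt (lt_trans hx₁mem.1 hx)) hx
    rw [hx₁] at this; linarith

lemma N_sign (α β : ℝ) (hα : 0 < α) (hβ1 : -1 < β) (hβ0 : β < 0) :
    ∃ xs > 0, ND α β xs = 0 ∧ (∀ x, 0 < x → x < xs → ND α β x < 0) ∧
      (∀ x, xs < x → 0 < ND α β x) := by
  obtain ⟨x₁, hx₁pos, hmpos, hmneg⟩ := m_shape α β hα hβ1 hβ0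
  have hcont : ∀ s : Set ℝ, ContinuousOn (ND α β) s := fun s x _ =>
    (hasDerivAt_N α β x).continuousAt.continuousWithinAt
  have hmono : StrictMonoOn (ND α β) (Icc 0 x₁) := by
    apply strictMonoOn_of_deriv_pos (convex_Icc 0 x₁) (hcont _)
    intro x hx
    rw [interior_Icc] at hx
    rw [(hasDerivAt_N α β x).deriv]
    exact mul_pos (Real.exp_pos _) (hmpos x (le_of_lt hx.1) hx.2)
  have hanti : StrictAntiOn (ND α β) (Ici x₁) := by
    apply strictAntiOn_of_deriv_neg (convex_Ici x₁) (hcont _)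
    intro x hx
    rw [interior_Ici] at hx
    rw [(hasDerivAt_N α β x).deriv]
    exact mul_neg_of_pos_of_neg (Real.exp_pos _) (hmneg x hx.out)
  -- limit of N at infinity is 1 + β
  have h0 : Tendsto (fun x : ℝ => Real.exp (-x)) atTop (nhds 0) :=
    Real.tendsto_exp_neg_atTop_nhds_zero
  have h1 : Tendsto (fun x : ℝ => x * Real.exp (-x)) atTop (nhds 0) := by
    simpa using tendsto_pow_mul_exp_neg_atTop_nhds_zero 1
  have hlim : Tendsto (ND α β) atTop (nhds (1 + β)) := by
    have h := ((((h0.const_sub 1).const_mul β).sub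
      ((h0.const_mul α).add (h1.const_mul β))).add ((h0.const_sub 1).pow 2))
    have : (β * (1 - 0) - (α * 0 + β * 0) + (1 - 0)^2 : ℝ) = 1 + β := by ring
    rw [this] at h
    refine h.congr fun x => ?_
    simp only [ND]; ring
  have hNbig : ∀ x, x₁ ≤ x → 1 + β ≤ ND α β x := by
    intro x hx
    refine le_of_tendsto hlim ?_
    filter_upwards [eventually_ge_atTop x] with y hy
    rcases eq_or_lt_of_le hy with h | h
    · exact le_of_eq (by rw [h])
    · exact le_of_lt (hanti hx (le_trans hx hy) h)
  have hN0 : ND α β 0 = -α := by simp [ND]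
  have hNx₁ : 0 < ND α β x₁ := lt_of_lt_of_le (by linarith) (hNbig x₁ le_rfl)
  obtain ⟨xs, hxsmem, hxs⟩ := intermediate_value_Ioo (le_of_lt hx₁pos) (hcont _)
    (show (0:ℝ) ∈ Ioo (ND α β 0) (ND α β x₁) from ⟨by rw [hN0]; linarith, hNx₁⟩)
  refine ⟨xs, hxsmem.1, hxs, ?_, ?_⟩
  · intro x hx0 hxxs
    have := hmono ⟨le_of_lt hx0, le_of_lt (lt_trans hxxs hxsmem.2)⟩
      ⟨le_of_lt hxsmem.1, le_of_lt hxsmem.2⟩ hxxs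
    rw [hxs] at this; exact this
  · intro x hx
    rcases le_or_gt x x₁ with h | h
    · have := hmono ⟨le_of_lt hxsmem.1, le_of_lt hxsmem.2⟩
        ⟨le_of_lt (lt_trans hxsmem.1 hx), h⟩ hx
      rw [hxs] at this; exact this
    · exact lt_of_lt_of_le (by linarith) (hNbig x (le_of_lt h))

lemma tendsto_zero (α β : ℝ) (hα : 0 < α) :
    Tendsto (fD α β) (nhdsWithin 0 (Set.Ioi 0)) atTop := by
  have hnum : Tendsto (fun x : ℝ => α + β * x) (nhdsWithin 0 (Set.Ioi 0)) (nhds α) := by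
    have hcont : Continuous fun x : ℝ => α + β * x := by continuity
    have h := (hcont.tendsto 0).mono_left (nhdsWithin_le_nhds (s := Set.Ioi (0:ℝ)))
    simpa using h
  have hden : Tendsto (fun x : ℝ => 1 - Real.exp (-x)) (nhdsWithin 0 (Set.Ioi 0))
      (nhdsWithin 0 (Set.Ioi 0)) := by
    rw [tendsto_nhdsWithin_iff]
    constructor
    · have hcont : Continuous fun x : ℝ => 1 - Real.exp (-x) := by continuity
      have h := (hcont.tendsto 0).mono_left (nhdsWithin_le_nhds (s := Set.Ioi (0:ℝ)))
      simpa using h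
    · filter_upwards [self_mem_nhdsWithin] with x hx
      exact Set.mem_Ioi.2 (dpos x hx)
  have hdiv : Tendsto (fun x : ℝ => (α + β * x) / (1 - Real.exp (-x)))
      (nhdsWithin 0 (Set.Ioi 0)) atTop := by
    have h := hnum.pos_mul_atTop hα (tendsto_inv_nhdsGT_zero.comp hden)
    exact h.congr fun x => (div_eq_mul_inv _ _).symm
  have hx0 : Tendsto (fun x : ℝ => x) (nhdsWithin 0 (Set.Ioi 0)) (nhds 0) :=
    (continuous_id.tendsto 0).mono_left nhdsWithin_le_nhds
  exact hdiv.atTop_add hx0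

lemma tendsto_top (α β : ℝ) (hα : 0 < α) (hβ1 : -1 < β) (hβ0 : β < 0) :
    Tendsto (fD α β) atTop atTop := by
  set c : ℝ := (1 - β) / 2 with hc_def
  have hc : 0 < c := by rw [hc_def]; linarith
  have hε : 0 < 1 - c := by rw [hc_def]; linarith
  have hs : 0 < β / c + 1 := by
    rw [hc_def]
    rw [div_add' _ _ _ (by linarith : (1-β)/2 ≠ 0)]
    apply div_pos (by linarith) (by linarith)
  have hlin : Tendsto (fun x : ℝ => α + (β / c * x + x)) atTop atTop := by
    apply tendsto_atTop_add_const_left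
    have h := (tendsto_id : Tendsto id (atTop : Filter ℝ) atTop).const_mul_atTop hs
    exact h.congr fun x => by simp only [id_eq]; ring
  apply tendsto_atTop_mono' _ _ hlin
  filter_upwards [eventually_ge_atTop (max 1 (-Real.log (1 - c)))] with x hx
  have hx1 : (1:ℝ) ≤ x := le_trans (le_max_left _ _) hx
  have hx0 : 0 < x := by linarith
  have hd0 : 0 < 1 - Real.exp (-x) := dpos x hx0
  have hd1 : 1 - Real.exp (-x) < 1 := by linarith [Real.exp_pos (-x)]
  have hdc : c ≤ 1 - Real.exp (-x) := by
    have hxl : -Real.log (1 - c) ≤ x := le_trans (le_max_right _ _) hx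
    have : Real.exp (-x) ≤ Real.exp (Real.log (1 - c)) := Real.exp_le_exp.2 (by linarith)
    rw [Real.exp_log hε] at this
    linarith
  have hβx : β * x ≤ 0 := mul_nonpos_of_nonpos_of_nonneg (le_of_lt hβ0) (le_of_lt hx0)
  have key : α + β / c * x ≤ (α + β * x) / (1 - Real.exp (-x)) := by
    have h1 : α + β / c * x = (α * c + β * x) / c := by field_simp
    rw [h1, div_le_div_iff₀ hc hd0]
    nlinarith [mul_nonneg (mul_pos hα hc).le
        (by linarith : (0:ℝ) ≤ 1 - (1 - Real.exp (-x))),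
      mul_nonpos_of_nonpos_of_nonneg hβx
        (by linarith : (0:ℝ) ≤ (1 - Real.exp (-x)) - c)]
  show α + (β / c * x + x) ≤ fD α β x
  unfold fD
  linarith

/-- For `α > 0` and `β ∈ (-1, 0)`, the function `f(x) = (α + βx)/(1 - e^{-x}) + x`
tends to `∞` as `x → 0⁺` and as `x → ∞`, attains a global minimum on `(0, ∞)` at a
unique point `x*`, and is strictly increasing on `(x*, ∞)`. -/
theorem stmt_7 (α β : ℝ) (hα : 0 < α) (hβ : β ∈ Set.Ioo (-1 : ℝ) 0) :
    Tendsto (fun x : ℝ => (α + β * x) / (1 - Real.exp (-x)) + x)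
      (nhdsWithin 0 (Set.Ioi 0)) atTop ∧
    Tendsto (fun x : ℝ => (α + β * x) / (1 - Real.exp (-x)) + x) atTop atTop ∧
    ∃ xstar : ℝ, 0 < xstar ∧
      IsMinOn (fun x : ℝ => (α + β * x) / (1 - Real.exp (-x)) + x)
        (Set.Ioi 0) xstar ∧
      (∀ y : ℝ, 0 < y →
        IsMinOn (fun x : ℝ => (α + β * x) / (1 - Real.exp (-x)) + x) (Set.Ioi 0) y →
        y = xstar) ∧
      StrictMonoOn (fun x : ℝ => (α + β * x) / (1 - Real.exp (-x)) + x)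
        (Set.Ioi xstar) := by
  obtain ⟨hβ1, hβ0⟩ := hβ
  have hfeq : (fun x : ℝ => (α + β * x) / (1 - Real.exp (-x)) + x) = fD α β := rfl
  rw [hfeq]
  obtain ⟨xs, hxs_pos, hNxs, hNneg, hNpos⟩ := N_sign α β hα hβ1 hβ0
  have hmono : StrictMonoOn (fD α β) (Ici xs) := by
    apply strictMonoOn_of_deriv_pos (convex_Ici xs)
    · exact fun x hx =>
        (hasDerivAt_f α β x (lt_of_lt_of_le hxs_pos hx)).continuousAt.continuousWithinAt
    · intro x hx
      rw [interior_Ici] at hx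
      have hx0 : 0 < x := lt_trans hxs_pos hx.out
      rw [(hasDerivAt_f α β x hx0).deriv]
      exact div_pos (hNpos x hx.out) (pow_pos (dpos x hx0) 2)
  have hanti : StrictAntiOn (fD α β) (Ioc 0 xs) := by
    apply strictAntiOn_of_deriv_neg (convex_Ioc 0 xs)
    · exact fun x hx => (hasDerivAt_f α β x hx.1).continuousAt.continuousWithinAt
    · intro x hx
      rw [interior_Ioc] at hx
      rw [(hasDerivAt_f α β x hx.1).deriv]
      exact div_neg_of_neg_of_pos (hNneg x hx.1 hx.2) (pow_pos (dpos x hx.1) 2)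
  refine ⟨tendsto_zero α β hα, tendsto_top α β hα hβ1 hβ0, xs, hxs_pos, ?_, ?_,
    hmono.mono Ioi_subset_Ici_self⟩
  · intro y hy
    rcases lt_trichotomy y xs with h | h | h
    · exact le_of_lt (hanti ⟨hy, le_of_lt h⟩ ⟨hxs_pos, le_rfl⟩ h)
    · exact le_of_eq (congrArg (fD α β) h.symm)
    · exact le_of_lt (hmono (Set.mem_Ici.2 (le_refl xs)) (le_of_lt h) h)
  · intro y hy hmin
    by_contra hne
    have h1 : fD α β y ≤ fD α β xs := hmin hxs_pos
    rcases lt_or_gt_of_ne hne with h | h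
    · exact absurd h1 (not_le.2 (hanti ⟨hy, le_of_lt h⟩ ⟨hxs_pos, le_rfl⟩ h))
    · exact absurd h1 (not_le.2 (hmono (Set.mem_Ici.2 (le_refl xs)) (le_of_lt h) h))
end

section
/- Fix reals σ > 0, T_obs > 0 and T_tr > 0, and let T = T_obs + T_tr. Define f_N(λ) = 2/λ + (T − (σ T_obs/λ)(1 + e^{−σ T_obs}))/(1 − e^{−σ T_obs}) for λ > 0. Then f_N is strictly increasing on (0, ∞). -/
lemma key_ineq {c : ℝ} (hc : 0 < c) : 0 < (c + 2) * Real.exp (-c) + c - 2 := by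
  have hmono : StrictMonoOn (fun x : ℝ => (x + 2) * Real.exp (-x) + x - 2) (Set.Ici 0) := by
    apply strictMonoOn_of_deriv_pos (convex_Ici 0)
    · fun_prop
    · intro x hx
      rw [interior_Ici] at hx
      have hd : HasDerivAt (fun x : ℝ => (x + 2) * Real.exp (-x) + x - 2)
          (1 - (x + 1) * Real.exp (-x)) x := by
        have h1 : HasDerivAt (fun x : ℝ => Real.exp (-x)) (-Real.exp (-x)) x := by
          simpa using (hasDerivAt_neg x).exp
        have h2 : HasDerivAt (fun x : ℝ => (x + 2) * Real.exp (-x))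
            (1 * Real.exp (-x) + (x + 2) * (-Real.exp (-x))) x :=
          ((hasDerivAt_id x).add_const 2).mul h1
        have := (h2.add (hasDerivAt_id x)).sub_const 2
        exact this.congr_deriv (by ring)
      rw [hd.deriv]
      have hlt : x + 1 < Real.exp x := Real.add_one_lt_exp (ne_of_gt hx)
      have hE : 0 < Real.exp (-x) := Real.exp_pos _
      have : (x + 1) * Real.exp (-x) < Real.exp x * Real.exp (-x) := by
        exact mul_lt_mul_of_pos_right hlt hE
      rw [← Real.exp_add] at this
      simp at this
      linarith
  have := hmono (Set.self_mem_Ici) (Set.mem_Ici.mpr hc.le) hc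
  simpa using this


/-- For fixed `σ, T_obs, T_tr > 0` with `T = T_obs + T_tr`, the expected-delay function
`f_N(λ) = 2/λ + (T - (σ T_obs/λ)(1 + e^{-σ T_obs}))/(1 - e^{-σ T_obs})` is strictly
increasing on `(0, ∞)`. -/
theorem stmt_9 (σ Tobs Ttr T : ℝ) (hσ : 0 < σ) (hTobs : 0 < Tobs) (hTtr : 0 < Ttr)
    (hT : T = Tobs + Ttr) :
    StrictMonoOn
      (fun lam : ℝ =>
        2 / lam +
          (T - (σ * Tobs / lam) * (1 + Real.exp (-(σ * Tobs)))) /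
            (1 - Real.exp (-(σ * Tobs))))
      (Set.Ioi 0) := by
  set c := σ * Tobs with hc
  have hcpos : 0 < c := mul_pos hσ hTobs
  set E := Real.exp (-c) with hE
  have hE0 : 0 < E := Real.exp_pos _
  have hE1 : E < 1 := by
    rw [hE, Real.exp_lt_one_iff]; linarith
  have hD : 0 < 1 - E := by linarith
  have hkey : 0 < (c + 2) * E + c - 2 := key_ineq hcpos
  have hA : c * (1 + E) - 2 * (1 - E) > 0 := by nlinarith
  intro a ha b hb hab
  simp only [Set.mem_Ioi] at ha hb
  have h1 : (2 : ℝ) / a + (T - (c / a) * (1 + E)) / (1 - E)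
      = (2 * (1 - E) - c * (1 + E)) / ((1 - E) * a) + T / (1 - E) := by
    field_simp
    ring
  have h2 : (2 : ℝ) / b + (T - (c / b) * (1 + E)) / (1 - E)
      = (2 * (1 - E) - c * (1 + E)) / ((1 - E) * b) + T / (1 - E) := by
    field_simp
    ring
  simp only [h1, h2]
  have hnum : 2 * (1 - E) - c * (1 + E) < 0 := by linarith
  have : (2 * (1 - E) - c * (1 + E)) / ((1 - E) * a)
      < (2 * (1 - E) - c * (1 + E)) / ((1 - E) * b) := by
    rw [div_lt_div_iff₀ (mul_pos hD ha) (mul_pos hD hb)]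
    nlinarith [mul_pos hD (sub_pos.mpr hab)]
  linarith
end

section
/- Fix reals σ > 0, λ_max > σ, and T_tr > 0. Define G(T_obs) = 2/λ_max + ((T_obs + T_tr)·λ_max − σ·T_obs·(1 + e^{−σ T_obs}))/((1 − e^{−σ T_obs})·λ_max) for T_obs > 0. Then G is quasi-convex on (0, ∞), i.e., every sublevel set of G is convex. -/
open Real Set Filter

noncomputable def Pfun (σ l Ttr t : ℝ) : ℝ :=
  (l - σ) * (1 - Real.exp (-(σ * t))) - σ * Real.exp (-(σ * t))
    + σ * (Real.exp (-(σ * t)))^2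
    + σ * (2 * σ - l) * t * Real.exp (-(σ * t)) - σ * l * Ttr * Real.exp (-(σ * t))

noncomputable def Qfun (σ l Ttr t : ℝ) : ℝ :=
  2 * (1 - Real.exp (-(σ * t))) + (l - 2 * σ) * t + l * Ttr

lemma hasDerivAt_E (σ t : ℝ) :
    HasDerivAt (fun x : ℝ => Real.exp (-(σ * x))) (Real.exp (-(σ * t)) * (-σ)) t := by
  have h1 : HasDerivAt (fun x : ℝ => -(σ * x)) (-σ) t := by
    exact ((hasDerivAt_id t).const_mul σ).neg.congr_deriv (by simp)
  exact (Real.hasDerivAt_exp (-(σ * t))).comp t h1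

lemma hasDerivAt_P (σ l Ttr t : ℝ) :
    HasDerivAt (Pfun σ l Ttr) (σ^2 * Real.exp (-(σ * t)) * Qfun σ l Ttr t) t := by
  have hE := hasDerivAt_E σ t
  have h1 : HasDerivAt (fun x : ℝ => (l - σ) * (1 - Real.exp (-(σ * x))))
      ((l - σ) * (0 - Real.exp (-(σ * t)) * (-σ))) t :=
    ((hasDerivAt_const t (1:ℝ)).sub hE).const_mul (l - σ)
  have h2 : HasDerivAt (fun x : ℝ => σ * Real.exp (-(σ * x)))
      (σ * (Real.exp (-(σ * t)) * (-σ))) t := hE.const_mul σ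
  have h3 : HasDerivAt (fun x : ℝ => σ * (Real.exp (-(σ * x)))^2)
      (σ * ((2:ℕ) * (Real.exp (-(σ * t)))^1 * (Real.exp (-(σ * t)) * (-σ)))) t :=
    (hE.pow 2).const_mul σ
  have h4 : HasDerivAt (fun x : ℝ => σ * (2 * σ - l) * x * Real.exp (-(σ * x)))
      ((σ * (2 * σ - l)) * Real.exp (-(σ * t))
        + (σ * (2 * σ - l) * t) * (Real.exp (-(σ * t)) * (-σ))) t := by
    have := ((hasDerivAt_id' t).const_mul (σ * (2 * σ - l))).mul hE
    exact this.congr_deriv (by ring)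
  have h5 : HasDerivAt (fun x : ℝ => σ * l * Ttr * Real.exp (-(σ * x)))
      ((σ * l * Ttr) * (Real.exp (-(σ * t)) * (-σ))) t := hE.const_mul (σ * l * Ttr)
  have hsum := (((h1.sub h2).add h3).add h4).sub h5
  have heq : (fun x : ℝ => (l - σ) * (1 - Real.exp (-(σ * x))) - σ * Real.exp (-(σ * x))
      + σ * (Real.exp (-(σ * x)))^2 + σ * (2 * σ - l) * x * Real.exp (-(σ * x))
      - σ * l * Ttr * Real.exp (-(σ * x))) = Pfun σ l Ttr := by
    funext x; rw [Pfun]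
  rw [← heq]
  refine hsum.congr_deriv ?_
  simp [Qfun]; ring

lemma P_diff (σ l Ttr : ℝ) : Differentiable ℝ (Pfun σ l Ttr) :=
  fun t => (hasDerivAt_P σ l Ttr t).differentiableAt

lemma Q_ccv (σ l Ttr : ℝ) {x y a b : ℝ} (ha : 0 ≤ a) (hb : 0 ≤ b) (hab : a + b = 1) :
    a * Qfun σ l Ttr x + b * Qfun σ l Ttr y ≤ Qfun σ l Ttr (a * x + b * y) := by
  have h := convexOn_exp.2 (Set.mem_univ (-(σ * x))) (Set.mem_univ (-(σ * y))) ha hb hab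
  simp only [smul_eq_mul] at h
  have hx : a * -(σ * x) + b * -(σ * y) = -(σ * (a * x + b * y)) := by ring
  rw [hx] at h
  have key : Qfun σ l Ttr (a * x + b * y) - (a * Qfun σ l Ttr x + b * Qfun σ l Ttr y)
      = 2 * ((a * Real.exp (-(σ * x)) + b * Real.exp (-(σ * y)))
          - Real.exp (-(σ * (a * x + b * y)))) - (2 + l * Ttr) * (a + b - 1) := by
    simp only [Qfun]; ring
  have hz : (2 + l * Ttr) * (a + b - 1) = 0 := by rw [hab]; ring
  linarith [h, key, hz]

lemma Q_zero (σ l Ttr : ℝ) : Qfun σ l Ttr 0 = l * Ttr := by simp [Qfun]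

lemma P_tendsto (σ l Ttr : ℝ) (hσ : 0 < σ) :
    Tendsto (Pfun σ l Ttr) atTop (nhds (l - σ)) := by
  have hst : Tendsto (fun t : ℝ => σ * t) atTop atTop :=
    Tendsto.const_mul_atTop hσ tendsto_id
  have hE : Tendsto (fun t : ℝ => Real.exp (-(σ * t))) atTop (nhds 0) := by
    have h0 : Tendsto (fun t : ℝ => -(σ * t)) atTop atBot := tendsto_neg_atTop_atBot.comp hst
    exact Real.tendsto_exp_atBot.comp h0
  have htE : Tendsto (fun t : ℝ => t * Real.exp (-(σ * t))) atTop (nhds 0) := by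
    have h1 : Tendsto (fun x : ℝ => x * Real.exp (-x)) atTop (nhds 0) := by
      simpa using Real.tendsto_pow_mul_exp_neg_atTop_nhds_zero 1
    have h2 : Tendsto (fun t : ℝ => 1/σ * ((σ * t) * Real.exp (-(σ * t)))) atTop
        (nhds (1/σ * 0)) := (h1.comp hst).const_mul (1/σ)
    have hfe : (fun t : ℝ => 1/σ * ((σ * t) * Real.exp (-(σ * t)))) =
        (fun t : ℝ => t * Real.exp (-(σ * t))) := by
      funext t
      field_simp
    rw [hfe, mul_zero] at h2
    exact h2
  have : Tendsto (fun t => (l - σ) * (1 - Real.exp (-(σ * t))) - σ * Real.exp (-(σ * t))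
      + σ * (Real.exp (-(σ * t)))^2 + σ * (2 * σ - l) * (t * Real.exp (-(σ * t)))
      - σ * l * Ttr * Real.exp (-(σ * t))) atTop
      (nhds ((l - σ) * (1 - 0) - σ * 0 + σ * 0^2 + σ * (2 * σ - l) * 0 - σ * l * Ttr * 0)) := by
    exact (((((tendsto_const_nhds.sub hE).const_mul (l - σ)).sub (hE.const_mul σ)).add
      (((hE.pow 2)).const_mul σ)).add (htE.const_mul (σ * (2 * σ - l)))).sub
      (hE.const_mul (σ * l * Ttr))
  have heq : (fun t => (l - σ) * (1 - Real.exp (-(σ * t))) - σ * Real.exp (-(σ * t))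
      + σ * (Real.exp (-(σ * t)))^2 + σ * (2 * σ - l) * (t * Real.exp (-(σ * t)))
      - σ * l * Ttr * Real.exp (-(σ * t))) = Pfun σ l Ttr := by
    funext t; simp [Pfun]; ring
  rw [heq] at this
  simpa using this

lemma P_stays_pos (σ l Ttr : ℝ) (hσ : 0 < σ) (hl : σ < l) (hTtr : 0 < Ttr)
    {a b : ℝ} (ha : 0 < a) (hab : a < b) (hPa : 0 < Pfun σ l Ttr a) :
    0 < Pfun σ l Ttr b := by
  by_cases hQb : 0 < Qfun σ l Ttr b
  · -- Q > 0 on (0,b), so P strictly increasing on [a,b]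
    have hb0 : (0:ℝ) < b := ha.trans hab
    have hQpos : ∀ t ∈ interior (Icc a b), 0 < Qfun σ l Ttr t := by
      intro t ht
      rw [interior_Icc] at ht
      have ht0 : 0 < t := ha.trans ht.1
      have htb : t < b := ht.2
      have hcomb : ((b - t)/b) * 0 + (t/b) * b = t := by field_simp; ring
      have h := Q_ccv σ l Ttr (x := 0) (y := b)
        (div_nonneg (by linarith : (0:ℝ) ≤ b - t) hb0.le)
        (div_nonneg (by linarith : (0:ℝ) ≤ t) hb0.le)
        (by field_simp; ring)
      rw [hcomb] at h
      rw [Q_zero] at h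
      have h1 : 0 < (b - t)/b := div_pos (by linarith : (0:ℝ) < b - t) hb0
      have h2 : 0 < t/b := div_pos ht0 hb0
      nlinarith [mul_pos h1 (mul_pos (hσ.trans hl) hTtr)]
    have hmono : StrictMonoOn (Pfun σ l Ttr) (Icc a b) := by
      apply strictMonoOn_of_deriv_pos (convex_Icc a b)
        ((P_diff σ l Ttr).continuous.continuousOn)
      intro t ht
      rw [(hasDerivAt_P σ l Ttr t).deriv]
      have hQ := hQpos t ht
      have hE := Real.exp_pos (-(σ * t))
      positivity
    have := hmono (left_mem_Icc.2 hab.le) (right_mem_Icc.2 hab.le) hab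
    linarith
  · push_neg at hQb
    have hb0 : (0:ℝ) < b := ha.trans hab
    have hQle : ∀ t, b ≤ t → Qfun σ l Ttr t ≤ 0 := by
      intro t hbt
      by_contra hpos
      push_neg at hpos
      have ht0 : 0 < t := hb0.trans_le hbt
      rcases eq_or_lt_of_le hbt with rfl | hbt'
      · linarith
      have hcomb : ((t - b)/t) * 0 + (b/t) * t = b := by field_simp; ring
      have h := Q_ccv σ l Ttr (x := 0) (y := t)
        (div_nonneg (by linarith : (0:ℝ) ≤ t - b) ht0.le)
        (div_nonneg (by linarith : (0:ℝ) ≤ b) ht0.le)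
        (by field_simp; ring)
      rw [hcomb, Q_zero] at h
      have h1 : 0 < (t - b)/t := div_pos (by linarith : (0:ℝ) < t - b) ht0
      have h2 : 0 < b/t := div_pos hb0 ht0
      nlinarith [mul_pos h1 (mul_pos (hσ.trans hl) hTtr), mul_pos h2 hpos]
    have hanti : AntitoneOn (Pfun σ l Ttr) (Ici b) := by
      apply antitoneOn_of_deriv_nonpos (convex_Ici b)
        ((P_diff σ l Ttr).continuous.continuousOn)
        ((P_diff σ l Ttr).differentiableOn)
      intro t ht
      rw [interior_Ici] at ht
      rw [(hasDerivAt_P σ l Ttr t).deriv]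
      have hQ := hQle t (le_of_lt ht)
      have hE := Real.exp_pos (-(σ * t))
      nlinarith [mul_nonneg (mul_pos (mul_pos hσ hσ) hE).le (neg_nonneg.mpr hQ)]
    have hge : l - σ ≤ Pfun σ l Ttr b := by
      apply le_of_tendsto (P_tendsto σ l Ttr hσ)
      filter_upwards [eventually_ge_atTop b] with t ht
      exact hanti (self_mem_Ici) ht ht
    linarith

lemma hasDerivAt_G (σ l Ttr : ℝ) (hσ : 0 < σ) (hl : σ < l) {t : ℝ} (ht : 0 < t) :
    HasDerivAt (fun T : ℝ => 2 / l +
        ((T + Ttr) * l - σ * T * (1 + Real.exp (-(σ * T)))) /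
          ((1 - Real.exp (-(σ * T))) * l))
      (Pfun σ l Ttr t / ((1 - Real.exp (-(σ * t)))^2 * l)) t := by
  have hE := hasDerivAt_E σ t
  have hl0 : 0 < l := hσ.trans hl
  have hE1 : Real.exp (-(σ * t)) < 1 := by
    rw [Real.exp_lt_one_iff]
    nlinarith
  have hne : (1 - Real.exp (-(σ * t))) * l ≠ 0 := by
    have : 0 < (1 - Real.exp (-(σ * t))) * l := by nlinarith
    exact this.ne'
  have hid : HasDerivAt (fun x : ℝ => x) 1 t := hasDerivAt_id t
  have hN : HasDerivAt (fun T : ℝ => (T + Ttr) * l - σ * T * (1 + Real.exp (-(σ * T))))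
      (1 * l - (σ * 1 * (1 + Real.exp (-(σ * t)))
        + σ * t * (0 + Real.exp (-(σ * t)) * (-σ)))) t :=
    ((hid.add_const Ttr).mul_const l).sub
      ((hid.const_mul σ).mul ((hasDerivAt_const t (1:ℝ)).add hE))
  have hD : HasDerivAt (fun T : ℝ => (1 - Real.exp (-(σ * T))) * l)
      ((0 - Real.exp (-(σ * t)) * (-σ)) * l) t :=
    ((hasDerivAt_const t (1:ℝ)).sub hE).mul_const l
  have hG := (hasDerivAt_const t (2 / l)).add (hN.div hD hne)
  have h1 : (0:ℝ) < 1 - Real.exp (-(σ * t)) := by linarith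
  refine hG.congr_deriv (Eq.symm ?_)
  rw [eq_comm]
  simp only [zero_add, Pfun]
  rw [div_eq_div_iff (by positivity) (by positivity)]
  ring

/-- For fixed `σ > 0`, `λ_max > σ` and `T_tr > 0`, the function
`G(T_obs) = 2/λ_max + ((T_obs + T_tr) λ_max - σ T_obs (1 + e^{-σ T_obs})) / ((1 - e^{-σ T_obs}) λ_max)`
is quasi-convex on `(0, ∞)`. -/
theorem stmt_10 (σ lamMax Ttr : ℝ) (hσ : 0 < σ) (hlam : σ < lamMax) (hTtr : 0 < Ttr) :
    QuasiconvexOn ℝ (Set.Ioi (0 : ℝ))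
      (fun Tobs =>
        2 / lamMax +
          ((Tobs + Ttr) * lamMax - σ * Tobs * (1 + Real.exp (-(σ * Tobs)))) /
            ((1 - Real.exp (-(σ * Tobs))) * lamMax)) := by
  set G : ℝ → ℝ := fun Tobs =>
        2 / lamMax +
          ((Tobs + Ttr) * lamMax - σ * Tobs * (1 + Real.exp (-(σ * Tobs)))) /
            ((1 - Real.exp (-(σ * Tobs))) * lamMax) with hGdef
  intro bb
  apply Set.OrdConnected.convex
  constructor
  rintro x ⟨hx0, hGx⟩ z ⟨hz0, hGz⟩ y ⟨hxy, hyz⟩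
  simp only [Set.mem_Ioi] at hx0 hz0
  have hy0 : (0:ℝ) < y := lt_of_lt_of_le hx0 hxy
  refine ⟨Set.mem_Ioi.2 hy0, ?_⟩
  by_contra hGy
  push_neg at hGy
  rcases eq_or_lt_of_le hxy with rfl | hxy'
  · exact absurd hGx (not_le.2 hGy)
  rcases eq_or_lt_of_le hyz with rfl | hyz'
  · exact absurd hGz (not_le.2 hGy)
  -- derivative facts
  have hposden : ∀ t : ℝ, 0 < t → 0 < ((1 - Real.exp (-(σ * t)))^2 * lamMax) := by
    intro t ht
    have hE1 : Real.exp (-(σ * t)) < 1 := by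
      rw [Real.exp_lt_one_iff]; nlinarith
    have h1 : (0:ℝ) < 1 - Real.exp (-(σ * t)) := by nlinarith
    have h2 : (0:ℝ) < lamMax := hσ.trans hlam
    positivity
  have hder : ∀ t : ℝ, 0 < t →
      HasDerivAt G (Pfun σ lamMax Ttr t / ((1 - Real.exp (-(σ * t)))^2 * lamMax)) t :=
    fun t ht => hasDerivAt_G σ lamMax Ttr hσ hlam ht
  have hcont : ∀ s : Set ℝ, (∀ t ∈ s, (0:ℝ) < t) → ContinuousOn G s := by
    intro s hs t ht
    exact ((hder t (hs t ht)).differentiableAt.continuousAt).continuousWithinAt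
  obtain ⟨ξ₁, hξ₁, hs₁⟩ := exists_hasDerivAt_eq_slope G
    (fun t => Pfun σ lamMax Ttr t / ((1 - Real.exp (-(σ * t)))^2 * lamMax)) hxy'
    (hcont _ (fun t ht => lt_of_lt_of_le hx0 ht.1))
    (fun t ht => hder t (hx0.trans ht.1))
  obtain ⟨ξ₂, hξ₂, hs₂⟩ := exists_hasDerivAt_eq_slope G
    (fun t => Pfun σ lamMax Ttr t / ((1 - Real.exp (-(σ * t)))^2 * lamMax)) hyz'
    (hcont _ (fun t ht => lt_of_lt_of_le hy0 ht.1))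
    (fun t ht => hder t (hy0.trans ht.1))
  have hξ₁0 : 0 < ξ₁ := hx0.trans hξ₁.1
  have hξ₂0 : 0 < ξ₂ := hy0.trans hξ₂.1
  have hslope₁ : 0 < Pfun σ lamMax Ttr ξ₁ / ((1 - Real.exp (-(σ * ξ₁)))^2 * lamMax) := by
    rw [hs₁]
    apply div_pos (by linarith) (by linarith [hξ₁.1, hξ₁.2])
  have hslope₂ : Pfun σ lamMax Ttr ξ₂ / ((1 - Real.exp (-(σ * ξ₂)))^2 * lamMax) < 0 := by
    rw [hs₂]
    apply div_neg_of_neg_of_pos (by linarith) (by linarith [hξ₂.1, hξ₂.2])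
  have hP₁ : 0 < Pfun σ lamMax Ttr ξ₁ := by
    have hd := hposden ξ₁ hξ₁0
    by_contra h
    push_neg at h
    have : Pfun σ lamMax Ttr ξ₁ / ((1 - Real.exp (-(σ * ξ₁)))^2 * lamMax) ≤ 0 :=
      div_nonpos_of_nonpos_of_nonneg h hd.le
    linarith
  have hP₂ : 0 < Pfun σ lamMax Ttr ξ₂ :=
    P_stays_pos σ lamMax Ttr hσ hlam hTtr hξ₁0 (hξ₁.2.trans hξ₂.1) hP₁
  have hd₂ := hposden ξ₂ hξ₂0
  have : 0 < Pfun σ lamMax Ttr ξ₂ / ((1 - Real.exp (-(σ * ξ₂)))^2 * lamMax) :=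
    div_pos hP₂ hd₂
  linarith
end

section
/- Fix reals λ > 0 and T > 0, and define h(t) = 2/λ + (T − t − t·e^{−λ t})/(1 − e^{−λ t}) for t ∈ (0, T). Then h is strictly decreasing on (0, T). -/
lemma key_ineq_s11 (s : ℝ) (hs : 0 < s) :
    Real.exp (-s) ^ 2 - 1 + s * Real.exp (-s) ≤ 0 := by
  have he : s + 1 ≤ Real.exp s := Real.add_one_le_exp s
  have hmul : Real.exp (-s) * Real.exp s = 1 := by
    rw [← Real.exp_add]; simp
  have h1 : Real.exp (-s) ≤ 1 := Real.exp_le_one_iff.mpr (by linarith)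
  nlinarith [Real.exp_pos (-s), Real.exp_pos s]

/-- For fixed `λ > 0` and `T > 0`, the expected delay
`h(t) = 2/λ + (T - t - t e^{-λt})/(1 - e^{-λt})` is strictly decreasing on `(0, T)`. -/
theorem stmt_11 (lam T : ℝ) (hlam : 0 < lam) (hT : 0 < T) :
    StrictAntiOn
      (fun t : ℝ =>
        2 / lam + (T - t - t * Real.exp (-(lam * t))) / (1 - Real.exp (-(lam * t))))
      (Set.Ioo 0 T) := by
  have hD : ∀ t ∈ Set.Ioo (0:ℝ) T, (1 - Real.exp (-(lam * t))) ≠ 0 := by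
    intro t ht
    have : Real.exp (-(lam * t)) < 1 :=
      Real.exp_lt_one_iff.mpr (by nlinarith [ht.1])
    linarith
  have hderiv : ∀ t ∈ Set.Ioo (0:ℝ) T,
      HasDerivAt
        (fun t : ℝ =>
          2 / lam + (T - t - t * Real.exp (-(lam * t))) / (1 - Real.exp (-(lam * t))))
        ((Real.exp (-(lam * t)) ^ 2 - 1 + lam * Real.exp (-(lam * t)) * (2 * t - T)) /
          (1 - Real.exp (-(lam * t))) ^ 2) t := by
    intro t ht
    have hu : HasDerivAt (fun t : ℝ => Real.exp (-(lam * t)))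
        (-lam * Real.exp (-(lam * t))) t := by
      have h1 : HasDerivAt (fun t : ℝ => -(lam * t)) (-lam) t := by
        exact (((hasDerivAt_id t).const_mul lam).neg).congr_deriv (by ring)
      refine ((Real.hasDerivAt_exp (-(lam * t))).comp t h1).congr_deriv ?_
      ring
    have hN : HasDerivAt (fun t : ℝ => T - t - t * Real.exp (-(lam * t)))
        (0 - 1 - (1 * Real.exp (-(lam * t)) + t * (-lam * Real.exp (-(lam * t))))) t :=
      ((hasDerivAt_const t T).sub (hasDerivAt_id t)).sub ((hasDerivAt_id t).mul hu)
    have hDen : HasDerivAt (fun t : ℝ => 1 - Real.exp (-(lam * t)))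
        (0 - (-lam * Real.exp (-(lam * t)))) t :=
      (hasDerivAt_const t 1).sub hu
    have H := ((hN.div hDen (hD t ht)).const_add (2 / lam))
    refine H.congr_deriv ?_
    ring
  apply strictAntiOn_of_deriv_neg (convex_Ioo 0 T)
  · intro t ht
    exact (hderiv t ht).continuousAt.continuousWithinAt
  · intro t ht
    rw [interior_Ioo] at ht
    rw [(hderiv t ht).deriv]
    have hu1 : Real.exp (-(lam * t)) < 1 :=
      Real.exp_lt_one_iff.mpr (by nlinarith [ht.1])
    have upos := Real.exp_pos (-(lam * t))
    apply div_neg_of_neg_of_pos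
    · have hk := key_ineq_s11 (lam * t) (mul_pos hlam ht.1)
      have hes : Real.exp (-(lam * t)) = Real.exp (-(lam * t)) := rfl
      have hlt : lam * (2 * t - T) < lam * t :=
        mul_lt_mul_of_pos_left (by linarith [ht.2]) hlam
      nlinarith [mul_lt_mul_of_pos_left hlt upos]
    · exact pow_pos (by linarith) 2
end

section
/- Let n ≥ 2 be an integer, let λ_1, …, λ_n > 0 and T_obs > 0 be reals, and let c ∈ (0, 1/n). Suppose t_1, …, t_n > 0 satisfy λ_2 t_2 = λ_3 t_3 = ⋯ = λ_n t_n, ∑_{i=1}^n t_i = T_obs, and λ_1 t_1 = c · ∑_{j=1}^n λ_j t_j. Then λ_1 t_1 = c(n−1)·T_obs / ((1−c)·∑_{i=2}^n (1/λ_i) + c(n−1)·(1/λ_1)). -/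
open Finset

/-- Closed form for the expected number of observations per cycle at station `1`
(here index `0`) of an unbalanced cyclic policy in which station `1` receives fraction
`c < 1/n` of the total expected observations and all other stations receive equal
fractions. -/
theorem stmt_12 (n : ℕ) (hn : 2 ≤ n) (lam t : Fin n → ℝ) (Tobs c : ℝ)
    (hlam : ∀ i, 0 < lam i) (ht : ∀ i, 0 < t i) (hTobs : 0 < Tobs)
    (hc : c ∈ Set.Ioo (0 : ℝ) (1 / n))
    (heq : ∀ i j : Fin n, i ≠ ⟨0, by omega⟩ → j ≠ ⟨0, by omega⟩ →
      lam i * t i = lam j * t j)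
    (hsum : ∑ i, t i = Tobs)
    (hfrac : lam ⟨0, by omega⟩ * t ⟨0, by omega⟩ = c * ∑ j, lam j * t j) :
    lam ⟨0, by omega⟩ * t ⟨0, by omega⟩ =
      c * ((n : ℝ) - 1) * Tobs /
        ((1 - c) * (∑ i ∈ Finset.univ.erase (⟨0, by omega⟩ : Fin n), 1 / lam i) +
          c * ((n : ℝ) - 1) * (1 / lam ⟨0, by omega⟩)) := by
  obtain ⟨hc0, hcn⟩ := hc
  set i0 : Fin n := ⟨0, by omega⟩ with hi0
  set i1 : Fin n := ⟨1, by omega⟩ with hi1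
  have hne : i1 ≠ i0 := by simp [hi0, hi1, Fin.ext_iff]
  set w := lam i1 * t i1 with hw
  have hweq : ∀ i ∈ Finset.univ.erase i0, lam i * t i = w :=
    fun i hi => heq i i1 (Finset.ne_of_mem_erase hi) hne
  set A := ∑ i ∈ Finset.univ.erase i0, 1 / lam i with hA
  have hApos : 0 < A := by
    apply Finset.sum_pos
    · intro i _; exact div_pos one_pos (hlam i)
    · exact ⟨i1, Finset.mem_erase.2 ⟨hne, Finset.mem_univ _⟩⟩
  have hcard : (Finset.univ.erase i0).card = n - 1 := by
    rw [Finset.card_erase_of_mem (Finset.mem_univ _), Finset.card_univ, Fintype.card_fin]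
  set z := lam i0 * t i0 with hz
  have hSsum : ∑ j, lam j * t j = z + ((n : ℝ) - 1) * w := by
    rw [← Finset.add_sum_erase _ _ (Finset.mem_univ i0), Finset.sum_congr rfl hweq,
      Finset.sum_const, hcard, nsmul_eq_mul]
    push_cast [Nat.cast_sub (by omega : 1 ≤ n)]
    ring
  have hfrac' : z = c * (z + ((n : ℝ) - 1) * w) := hfrac.trans (by rw [hSsum])
  set u := 1 / lam i0 with hu
  have hT : Tobs = z * u + w * A := by
    rw [← hsum, ← Finset.add_sum_erase _ _ (Finset.mem_univ i0)]
    congr 1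
    · rw [hz, hu]
      rw [mul_one_div, mul_div_cancel_left₀ _ (hlam i0).ne']
    · rw [hA, Finset.mul_sum]
      refine Finset.sum_congr rfl fun i hi => ?_
      rw [← hweq i hi]
      field_simp [(hlam i).ne']
  have hc1 : c < 1 := by
    have hn1 : (1 : ℝ) ≤ n := by exact_mod_cast (by omega : 1 ≤ n)
    have : (1 : ℝ) / n ≤ 1 := by
      rw [div_le_one (by linarith)]; linarith
    linarith
  have hupos : 0 < u := div_pos one_pos (hlam i0)
  have hnpos : (0 : ℝ) < (n : ℝ) - 1 := by
    have : (2 : ℝ) ≤ n := by exact_mod_cast hn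
    linarith
  have hD : 0 < (1 - c) * A + c * ((n : ℝ) - 1) * u := by
    have h1 : 0 < (1 - c) * A := mul_pos (by linarith) hApos
    have h2 : 0 < c * ((n : ℝ) - 1) * u := mul_pos (mul_pos hc0 hnpos) hupos
    linarith
  rw [eq_div_iff hD.ne']
  linear_combination A * hfrac' - c * ((n : ℝ) - 1) * hT
end

section
/- Fix reals σ > 0, T_obs > 0 and T_tr > 0, set T = T_obs + T_tr and x = σT_obs, and define f_N(λ) = 2/λ + (T − (σ T_obs/λ)(1 + e^{−x}))/(1 − e^{−x}) for λ > 0. Then for every λ ≥ 2σ, one has 0 < λ·f_N'(λ)/f_N(λ) < 1; explicitly, λ·f_N'(λ)/f_N(λ) = −(2 − 2e^{−x} − x(1 + e^{−x}))/(2 − 2e^{−x} − x(1 + e^{−x}) + λT), and this quantity lies strictly between 0 and 1. -/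
lemma sinh_lt_mul_cosh {t : ℝ} (ht : 0 < t) : Real.sinh t < t * Real.cosh t := by
  have h : StrictMonoOn (fun s : ℝ => s * Real.cosh s - Real.sinh s) (Set.Ici 0) := by
    refine strictMonoOn_of_deriv_pos (convex_Ici _) ?_ ?_
    · exact ((continuous_id.mul Real.continuous_cosh).sub Real.continuous_sinh).continuousOn
    · intro s hs
      rw [interior_Ici, Set.mem_Ioi] at hs
      have h1 : HasDerivAt (fun s : ℝ => s * Real.cosh s - Real.sinh s)
          (1 * Real.cosh s + s * Real.sinh s - Real.cosh s) s :=
        ((hasDerivAt_id s).mul (Real.hasDerivAt_cosh s)).sub (Real.hasDerivAt_sinh s)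
      rw [h1.deriv]
      have := Real.sinh_pos_iff.mpr hs
      nlinarith
  have := h (Set.self_mem_Ici) (le_of_lt ht : (0:ℝ) ≤ t) ht
  simpa using this

lemma A_neg {x : ℝ} (hx : 0 < x) :
    2 - 2 * Real.exp (-x) - x * (1 + Real.exp (-x)) < 0 := by
  have ht : 0 < x / 2 := by linarith
  have h := sinh_lt_mul_cosh ht
  rw [Real.sinh_eq, Real.cosh_eq] at h
  have he : Real.exp (-(x/2)) * Real.exp (x/2) = 1 := by
    rw [← Real.exp_add]; simp
  have hE : Real.exp (-x) = Real.exp (-(x/2)) * Real.exp (-(x/2)) := by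
    rw [← Real.exp_add]; ring_nf
  have hp : 0 < Real.exp (-(x/2)) := Real.exp_pos _
  nlinarith [Real.exp_pos (x/2)]

lemma A_add_x_pos {x : ℝ} (hx : 0 < x) :
    0 < 2 - 2 * Real.exp (-x) - x * (1 + Real.exp (-x)) + x := by
  -- reduces to (x+2)·e^{-x} < 2, i.e. x+2 < 2 e^x
  have h1 : x + 1 < Real.exp x := Real.add_one_lt_exp (ne_of_gt hx)
  have h2 : (1:ℝ) < Real.exp x := by
    have := Real.exp_pos x; nlinarith
  have h3 : x + 2 < 2 * Real.exp x := by nlinarith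
  have h4 : Real.exp (-x) * Real.exp x = 1 := by rw [← Real.exp_add]; simp
  have h5 : 0 < Real.exp (-x) := Real.exp_pos _
  nlinarith

/-- Robustness with respect to the arrival rate: for the expected-delay function
`f_N(λ) = 2/λ + (T - (σ T_obs/λ)(1 + e^{-x}))/(1 - e^{-x})` with `x = σ T_obs` and
`T = T_obs + T_tr`, for every `λ ≥ 2σ` the logarithmic sensitivity
`λ f_N'(λ)/f_N(λ)` equals `-(2 - 2e^{-x} - x(1+e^{-x}))/(2 - 2e^{-x} - x(1+e^{-x}) + λT)`
and lies strictly between `0` and `1`. -/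
theorem stmt_15 (σ Tobs Ttr T x : ℝ) (hσ : 0 < σ) (hTobs : 0 < Tobs) (hTtr : 0 < Ttr)
    (hT : T = Tobs + Ttr) (hx : x = σ * Tobs) (lam : ℝ) (hlam : 2 * σ ≤ lam) :
    lam * deriv (fun l : ℝ =>
        2 / l + (T - (σ * Tobs / l) * (1 + Real.exp (-x))) / (1 - Real.exp (-x))) lam /
      ((fun l : ℝ =>
        2 / l + (T - (σ * Tobs / l) * (1 + Real.exp (-x))) / (1 - Real.exp (-x))) lam) =
      -(2 - 2 * Real.exp (-x) - x * (1 + Real.exp (-x))) /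
        (2 - 2 * Real.exp (-x) - x * (1 + Real.exp (-x)) + lam * T) ∧
    0 < lam * deriv (fun l : ℝ =>
        2 / l + (T - (σ * Tobs / l) * (1 + Real.exp (-x))) / (1 - Real.exp (-x))) lam /
      ((fun l : ℝ =>
        2 / l + (T - (σ * Tobs / l) * (1 + Real.exp (-x))) / (1 - Real.exp (-x))) lam) ∧
    lam * deriv (fun l : ℝ =>
        2 / l + (T - (σ * Tobs / l) * (1 + Real.exp (-x))) / (1 - Real.exp (-x))) lam /
      ((fun l : ℝ =>
        2 / l + (T - (σ * Tobs / l) * (1 + Real.exp (-x))) / (1 - Real.exp (-x))) lam) <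
      1 := by
  set E : ℝ := Real.exp (-x) with hE
  set A : ℝ := 2 - 2 * E - x * (1 + E) with hA
  have hxpos : 0 < x := by rw [hx]; positivity
  have hlampos : 0 < lam := lt_of_lt_of_le (by linarith) hlam
  have hlne : lam ≠ 0 := ne_of_gt hlampos
  have hE1 : E < 1 := by
    rw [hE, Real.exp_lt_one_iff]; linarith
  have hEpos : 0 < E := Real.exp_pos _
  have hc : 0 < 1 - E := by linarith
  have hcne : (1 - E) ≠ 0 := ne_of_gt hc
  have hAneg : A < 0 := A_neg hxpos
  have hAx : 0 < A + x := by have := A_add_x_pos hxpos; linarith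
  have hlT : 2 * x < lam * T := by
    have h1 : 2 * σ * Tobs ≤ lam * Tobs := by
      exact mul_le_mul_of_nonneg_right hlam (le_of_lt hTobs)
    have h2 : lam * Tobs < lam * T := by
      rw [hT]; nlinarith
    nlinarith
  have hden : 0 < A + lam * T := by linarith
  -- derivative
  have hD : HasDerivAt (fun l : ℝ =>
      2 / l + (T - (σ * Tobs / l) * (1 + E)) / (1 - E))
      (2 * -(lam ^ 2)⁻¹ + (0 - σ * Tobs * (1 + E) * -(lam ^ 2)⁻¹) / (1 - E)) lam := by
    have hinv : HasDerivAt (fun l : ℝ => l⁻¹) (-(lam ^ 2)⁻¹) lam := hasDerivAt_inv hlne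
    have h1 : HasDerivAt (fun l : ℝ => 2 * l⁻¹) (2 * -(lam ^ 2)⁻¹) lam := hinv.const_mul 2
    have h2 : HasDerivAt (fun l : ℝ => σ * Tobs * (1 + E) * l⁻¹)
        (σ * Tobs * (1 + E) * -(lam ^ 2)⁻¹) lam := hinv.const_mul _
    have h3 : HasDerivAt (fun l : ℝ => T - σ * Tobs * (1 + E) * l⁻¹)
        (0 - σ * Tobs * (1 + E) * -(lam ^ 2)⁻¹) lam := (hasDerivAt_const lam T).sub h2
    have h4 := (h1.add (h3.div_const (1 - E)))
    have hfun : (fun l : ℝ => 2 / l + (T - (σ * Tobs / l) * (1 + E)) / (1 - E))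
        = fun l : ℝ => 2 * l⁻¹ + (T - σ * Tobs * (1 + E) * l⁻¹) / (1 - E) := by
      funext l; ring
    rw [hfun]; exact h4
  have hderiv := hD.deriv
  have hfval : (fun l : ℝ =>
      2 / l + (T - (σ * Tobs / l) * (1 + E)) / (1 - E)) lam = (A + lam * T) / ((1 - E) * lam) := by
    simp only [hA, hx]
    field_simp
    try ring
  have hfpos : 0 < (A + lam * T) / ((1 - E) * lam) := by positivity
  have hDval : 2 * -(lam ^ 2)⁻¹ + (0 - σ * Tobs * (1 + E) * -(lam ^ 2)⁻¹) / (1 - E)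
      = -A / ((1 - E) * lam ^ 2) := by
    simp only [hA, hx]
    field_simp
    try ring
  have hratio : lam * deriv (fun l : ℝ =>
        2 / l + (T - (σ * Tobs / l) * (1 + E)) / (1 - E)) lam /
      ((fun l : ℝ => 2 / l + (T - (σ * Tobs / l) * (1 + E)) / (1 - E)) lam)
      = -A / (A + lam * T) := by
    rw [hderiv, hDval, hfval]
    rw [div_eq_div_iff (by positivity) hden.ne']
    field_simp
  refine ⟨hratio, ?_, ?_⟩
  · rw [hratio]
    apply div_pos (by linarith) hden
  · rw [hratio, div_lt_one hden]
    linarith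
end

section
/- Fix reals σ > 0, λ_max ≥ 2σ, and T_obs > 0, set x = σT_obs, and define F(T_tr) = 2/λ_max + ((T_obs + T_tr)·λ_max − σ·T_obs·(1 + e^{−x}))/((1 − e^{−x})·λ_max) for T_tr > 0. Then F'(T_tr) = 1/(1 − e^{−x}) > 0 and, for every T_tr > 0, one has 0 < T_tr·F'(T_tr)/F(T_tr) < 1. -/
/-- Robustness with respect to the travel time: for
`F(T_tr) = 2/λ_max + ((T_obs + T_tr) λ_max - σ T_obs (1 + e^{-x}))/((1 - e^{-x}) λ_max)`
with `x = σ T_obs`, `σ > 0`, `λ_max ≥ 2σ` and `T_obs > 0`, one has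
`F'(T_tr) = 1/(1 - e^{-x}) > 0` and `0 < T_tr F'(T_tr)/F(T_tr) < 1` for all `T_tr > 0`. -/
theorem stmt_17 (σ lamMax Tobs x : ℝ) (hσ : 0 < σ) (hlam : 2 * σ ≤ lamMax)
    (hTobs : 0 < Tobs) (hx : x = σ * Tobs) :
    (∀ Ttr : ℝ, 0 < Ttr →
      deriv (fun s : ℝ =>
          2 / lamMax +
            ((Tobs + s) * lamMax - σ * Tobs * (1 + Real.exp (-x))) /
              ((1 - Real.exp (-x)) * lamMax)) Ttr =
        1 / (1 - Real.exp (-x))) ∧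
    0 < 1 / (1 - Real.exp (-x)) ∧
    ∀ Ttr : ℝ, 0 < Ttr →
      0 < Ttr * deriv (fun s : ℝ =>
            2 / lamMax +
              ((Tobs + s) * lamMax - σ * Tobs * (1 + Real.exp (-x))) /
                ((1 - Real.exp (-x)) * lamMax)) Ttr /
          ((fun s : ℝ =>
            2 / lamMax +
              ((Tobs + s) * lamMax - σ * Tobs * (1 + Real.exp (-x))) /
                ((1 - Real.exp (-x)) * lamMax)) Ttr) ∧
      Ttr * deriv (fun s : ℝ =>
            2 / lamMax +
              ((Tobs + s) * lamMax - σ * Tobs * (1 + Real.exp (-x))) /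
                ((1 - Real.exp (-x)) * lamMax)) Ttr /
          ((fun s : ℝ =>
            2 / lamMax +
              ((Tobs + s) * lamMax - σ * Tobs * (1 + Real.exp (-x))) /
                ((1 - Real.exp (-x)) * lamMax)) Ttr) < 1 := by

  have hE0 : 0 < Real.exp (-x) := Real.exp_pos _
  have hE1 : Real.exp (-x) < 1 := by
    rw [Real.exp_lt_one_iff]; nlinarith [mul_pos hσ hTobs]
  have hlam0 : 0 < lamMax := by linarith
  have h1E : 0 < 1 - Real.exp (-x) := by linarith
  have hden : 0 < (1 - Real.exp (-x)) * lamMax := mul_pos h1E hlam0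
  set E := Real.exp (-x) with hE
  have hderiv : ∀ Ttr : ℝ,
      deriv (fun s : ℝ => 2 / lamMax +
        ((Tobs + s) * lamMax - σ * Tobs * (1 + E)) / ((1 - E) * lamMax)) Ttr
        = 1 / (1 - E) := by
    intro Ttr
    have h1 : HasDerivAt (fun s : ℝ => (Tobs + s) * lamMax - σ * Tobs * (1 + E)) lamMax Ttr := by
      simpa using (((hasDerivAt_id Ttr).const_add Tobs).mul_const lamMax).sub_const
        (σ * Tobs * (1 + E))
    have h2 := (h1.div_const ((1 - E) * lamMax)).const_add (2 / lamMax)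
    have h3 : lamMax / ((1 - E) * lamMax) = 1 / (1 - E) := by
      field_simp
    rw [h3] at h2
    exact h2.deriv
  refine ⟨fun Ttr _ => hderiv Ttr, one_div_pos.mpr h1E, fun Ttr hTtr => ?_⟩
  rw [hderiv Ttr]
  simp only
  have hFval : 2 / lamMax + ((Tobs + Ttr) * lamMax - σ * Tobs * (1 + E)) / ((1 - E) * lamMax)
      = (2 * (1 - E) + ((Tobs + Ttr) * lamMax - σ * Tobs * (1 + E))) / ((1 - E) * lamMax) := by
    field_simp
  have hnum : Ttr * (1 / (1 - E)) = (Ttr * lamMax) / ((1 - E) * lamMax) := by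
    field_simp
  have hN2 : (0:ℝ) < 2 * (1 - E) + ((Tobs + Ttr) * lamMax - σ * Tobs * (1 + E)) := by
    nlinarith [mul_pos hTobs h1E, mul_pos hTtr hlam0]
  have hratio : Ttr * lamMax / ((1 - E) * lamMax) /
      ((2 * (1 - E) + ((Tobs + Ttr) * lamMax - σ * Tobs * (1 + E))) / ((1 - E) * lamMax))
      = Ttr * lamMax / (2 * (1 - E) + ((Tobs + Ttr) * lamMax - σ * Tobs * (1 + E))) := by
    field_simp
  rw [hFval, hnum, hratio]
  have hN : Ttr * lamMax < 2 * (1 - E) + ((Tobs + Ttr) * lamMax - σ * Tobs * (1 + E)) := by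
    nlinarith [mul_pos hTobs h1E]
  have hNL : 0 < Ttr * lamMax := mul_pos hTtr hlam0
  constructor
  · exact div_pos hNL (by linarith)
  · exact (div_lt_one (by linarith)).mpr hN
end

section
/- Fix reals σ > 0 and λ_max ≥ 2σ, and define F(T_obs, T_tr) = 2/λ_max + ((T_obs + T_tr)·λ_max − σ·T_obs·(1 + e^{−σT_obs}))/((1 − e^{−σT_obs})·λ_max) for T_obs, T_tr > 0. Then for every T_tr > 0 and every ε > 0, the infimum over T_obs > 0 of F(T_obs, (1+ε)·T_tr) is at most (1+ε) times the infimum over T_obs > 0 of F(T_obs, T_tr). -/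
/-- PTAS key inequality: for
`F(T_obs, T_tr) = 2/λ_max + ((T_obs + T_tr) λ_max - σ T_obs (1 + e^{-σ T_obs}))/((1 - e^{-σ T_obs}) λ_max)`
with `σ > 0` and `λ_max ≥ 2σ`, for every `T_tr > 0` and `ε > 0`, the infimum over
`T_obs > 0` of `F(T_obs, (1+ε) T_tr)` is at most `(1+ε)` times the infimum over
`T_obs > 0` of `F(T_obs, T_tr)`. -/
theorem stmt_18 (σ lamMax : ℝ) (hσ : 0 < σ) (hlam : 2 * σ ≤ lamMax) :
    ∀ Ttr : ℝ, 0 < Ttr → ∀ ε : ℝ, 0 < ε →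
      (⨅ Tobs : Set.Ioi (0 : ℝ),
        (2 / lamMax +
          (((Tobs : ℝ) + (1 + ε) * Ttr) * lamMax -
              σ * (Tobs : ℝ) * (1 + Real.exp (-(σ * (Tobs : ℝ))))) /
            ((1 - Real.exp (-(σ * (Tobs : ℝ)))) * lamMax))) ≤
      (1 + ε) *
      (⨅ Tobs : Set.Ioi (0 : ℝ),
        (2 / lamMax +
          (((Tobs : ℝ) + Ttr) * lamMax -
              σ * (Tobs : ℝ) * (1 + Real.exp (-(σ * (Tobs : ℝ))))) /
            ((1 - Real.exp (-(σ * (Tobs : ℝ)))) * lamMax))) := by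
  intro Ttr hTtr ε hε
  haveI : Nonempty (Set.Ioi (0 : ℝ)) := ⟨⟨1, by norm_num⟩⟩
  have hlam0 : 0 < lamMax := lt_of_lt_of_le (by linarith) hlam
  have hε1 : 0 < 1 + ε := by linarith
  set F1 : Set.Ioi (0 : ℝ) → ℝ := fun Tobs =>
    2 / lamMax +
      (((Tobs : ℝ) + (1 + ε) * Ttr) * lamMax -
          σ * (Tobs : ℝ) * (1 + Real.exp (-(σ * (Tobs : ℝ))))) /
        ((1 - Real.exp (-(σ * (Tobs : ℝ)))) * lamMax) with hF1
  set F2 : Set.Ioi (0 : ℝ) → ℝ := fun Tobs =>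
    2 / lamMax +
      (((Tobs : ℝ) + Ttr) * lamMax -
          σ * (Tobs : ℝ) * (1 + Real.exp (-(σ * (Tobs : ℝ))))) /
        ((1 - Real.exp (-(σ * (Tobs : ℝ)))) * lamMax) with hF2
  have key : ∀ T : Set.Ioi (0 : ℝ), F1 T ≤ (1 + ε) * F2 T := by
    intro T
    have hT : (0 : ℝ) < T := T.2
    set e := Real.exp (-(σ * (T : ℝ))) with he
    have he0 : 0 < e := Real.exp_pos _
    have he1 : e < 1 := by
      rw [he]
      have : -(σ * (T : ℝ)) < 0 := by nlinarith
      exact Real.exp_lt_one_iff.mpr this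
    have hd : 0 < 1 - e := by linarith
    have hden : 0 < (1 - e) * lamMax := mul_pos hd hlam0
    have hid : (1 + ε) * F2 T - F1 T =
        2 * ε / lamMax +
          ε * ((T : ℝ) * lamMax - σ * (T : ℝ) * (1 + e)) / ((1 - e) * lamMax) := by
      simp only [hF1, hF2, ← he]
      field_simp
      ring
    have hA : σ * (T : ℝ) * (1 + e) ≤ (T : ℝ) * lamMax := by
      have h1 : σ * (T : ℝ) * e ≤ σ * (T : ℝ) :=
        mul_le_of_le_one_right (mul_nonneg hσ.le hT.le) he1.le
      have h2 : (T : ℝ) * (2 * σ) ≤ (T : ℝ) * lamMax :=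
        mul_le_mul_of_nonneg_left hlam hT.le
      nlinarith
    have h3 : 0 ≤ 2 * ε / lamMax := by positivity
    have h4 : 0 ≤ ε * ((T : ℝ) * lamMax - σ * (T : ℝ) * (1 + e)) / ((1 - e) * lamMax) := by
      apply div_nonneg _ hden.le
      nlinarith
    rw [← sub_nonneg, hid]
    exact add_nonneg h3 h4
  -- infimum step
  have hinf : (⨅ T, F1 T) / (1 + ε) ≤ ⨅ T, F2 T := by
    apply le_ciInf
    intro T
    rw [div_le_iff₀ hε1]
    have hbdd : BddBelow (Set.range F1) := by
      refine ⟨0, ?_⟩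
      rintro x ⟨T', rfl⟩
      have hT' : (0 : ℝ) < T' := T'.2
      have he0 : (0:ℝ) < Real.exp (-(σ * (T' : ℝ))) := Real.exp_pos _
      have he1 : Real.exp (-(σ * (T' : ℝ))) < 1 := by
        apply Real.exp_lt_one_iff.mpr; nlinarith
      have hA : σ * (T' : ℝ) * (1 + Real.exp (-(σ * (T' : ℝ)))) ≤
          ((T' : ℝ) + (1 + ε) * Ttr) * lamMax := by
        have h1 : σ * (T' : ℝ) * Real.exp (-(σ * (T' : ℝ))) ≤ σ * (T' : ℝ) :=
          mul_le_of_le_one_right (mul_nonneg hσ.le hT'.le) he1.le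
        have h2 : (T' : ℝ) * (2 * σ) ≤ (T' : ℝ) * lamMax :=
          mul_le_mul_of_nonneg_left hlam hT'.le
        have h3 : 0 ≤ (1 + ε) * Ttr * lamMax := by positivity
        nlinarith
      have : (0:ℝ) ≤ (((T' : ℝ) + (1 + ε) * Ttr) * lamMax -
          σ * (T' : ℝ) * (1 + Real.exp (-(σ * (T' : ℝ))))) /
            ((1 - Real.exp (-(σ * (T' : ℝ)))) * lamMax) := by
        apply div_nonneg (by linarith) (by nlinarith)
      simp only [hF1]
      have h2 : (0:ℝ) ≤ 2 / lamMax := by positivity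
      linarith
    calc (⨅ T, F1 T) ≤ F1 T := ciInf_le hbdd T
      _ ≤ (1 + ε) * F2 T := key T
      _ = F2 T * (1 + ε) := mul_comm _ _
  calc (⨅ T, F1 T) = (⨅ T, F1 T) / (1 + ε) * (1 + ε) := by field_simp
    _ ≤ (⨅ T, F2 T) * (1 + ε) := by
        exact mul_le_mul_of_nonneg_right hinf (le_of_lt hε1)
    _ = (1 + ε) * ⨅ T, F2 T := mul_comm _ _
end
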